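/- arXiv:1712.08748 — 8 statements merged into one kernel-verified Lean document; each statement's English description precedes it below -/
import Mathlib

section
/- Under the unit-root assumption, for every j ∈ ℤ one has N_{j−1}A₁ − N_j(I − A₁) = δ_{j,0}·I and A₁N_{j−1} − (I − A₁)N_j = δ_{j,0}·I, where δ_{j,0} = 1 if j = 0 and δ_{j,0} = 0 otherwise. -/
open scoped Real
open Metric

/-- A continuous linear map commutes with `circleIntegral` of an integrable function. -/
lemma clm_circleIntegral_comp_comm {E F : Type*} [NormedAddCommGroup E] [NormedSpace ℂ E]
    [NormedAddCommGroup F] [NormedSpace ℂ F] [CompleteSpace E] [CompleteSpace F]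
    (L : E →L[ℂ] F) {f : ℂ → E} {c : ℂ} {R : ℝ} (hf : CircleIntegrable f c R) :
    L (∮ z in C(c, R), f z) = ∮ z in C(c, R), L (f z) := by
  have hf' : IntervalIntegrable (fun θ : ℝ => deriv (circleMap c R) θ • f (circleMap c R θ))
      MeasureTheory.volume 0 (2 * Real.pi) := hf.out
  simp only [circleIntegral, ← L.map_smul]
  exact (L.intervalIntegral_comp_comm hf').symm

lemma aux_integral {B : Type*} [NormedAddCommGroup B] [NormedSpace ℂ B] [CompleteSpace B]
    (r : ℝ) (hr0 : 0 < r) (u v : ℂ → (B →L[ℂ] B))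
    (hu : ContinuousOn u (sphere (1 : ℂ) r)) (hv : ContinuousOn v (sphere (1 : ℂ) r))
    (huv : ∀ z ∈ sphere (1 : ℂ) r, (z - 1) • u z - v z = -1) (j : ℤ) :
    (-(2 * (Real.pi : ℂ) * Complex.I)⁻¹) • (∮ z in C(1, r), (z - 1) ^ (-j) • u z)
      - (-(2 * (Real.pi : ℂ) * Complex.I)⁻¹) • (∮ z in C(1, r), (z - 1) ^ (-j - 1) • v z)
      = (if j = 0 then 1 else 0) := by
  have hne : ∀ z ∈ sphere (1 : ℂ) r, z - 1 ≠ 0 := by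
    intro z hz h
    rw [mem_sphere_iff_norm, h, norm_zero] at hz
    exact hr0.ne hz
  have hcz : ∀ n : ℤ, ContinuousOn (fun z : ℂ => (z - 1) ^ n) (sphere (1 : ℂ) r) := by
    intro n
    exact (continuousOn_id.sub continuousOn_const).zpow₀ n fun z hz => Or.inl (hne z hz)
  have hu' : CircleIntegrable (fun z => (z - 1) ^ (-j) • u z) 1 r :=
    ((hcz (-j)).smul hu).circleIntegrable hr0.le
  have hv' : CircleIntegrable (fun z => (z - 1) ^ (-j - 1) • v z) 1 r :=
    ((hcz (-j - 1)).smul hv).circleIntegrable hr0.le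
  rw [← smul_sub, ← circleIntegral.integral_sub hu' hv']
  have hcongr : (∮ z in C(1, r), ((z - 1) ^ (-j) • u z - (z - 1) ^ (-j - 1) • v z))
      = ∮ z in C(1, r), (z - 1) ^ (-j - 1) • (-1 : B →L[ℂ] B) := by
    refine circleIntegral.integral_congr hr0.le fun z hz => ?_
    have h1 : (z - 1) ^ (-j) = (z - 1) ^ (-j - 1) * (z - 1) := by
      rw [← zpow_add_one₀ (hne z hz)]; ring_nf
    calc (z - 1) ^ (-j) • u z - (z - 1) ^ (-j - 1) • v z
        = (z - 1) ^ (-j - 1) • ((z - 1) • u z - v z) := by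
          rw [h1, smul_sub, mul_smul]
      _ = (z - 1) ^ (-j - 1) • (-1 : B →L[ℂ] B) := by rw [huv z hz]
  rw [hcongr, circleIntegral.integral_smul_const]
  by_cases hj : j = 0
  · subst hj
    have h2 : (∮ z in C(1, r), (z - 1) ^ (-(0:ℤ) - 1)) = 2 * Real.pi * Complex.I := by
      have : ∀ z : ℂ, (z - 1) ^ (-(0:ℤ) - 1) = (z - 1)⁻¹ := by
        intro z; norm_num
      simp only [this]
      exact circleIntegral.integral_sub_inv_of_mem_ball (by simpa using hr0)
    rw [h2, if_pos rfl, smul_smul]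
    have hpi : (2 * (Real.pi : ℂ) * Complex.I) ≠ 0 := by
      simp [Real.pi_ne_zero, Complex.I_ne_zero, Complex.ofReal_ne_zero]
    rw [neg_mul, inv_mul_cancel₀ hpi]
    simp
  · have h2 : (∮ z in C(1, r), (z - 1) ^ (-j - 1)) = 0 :=
      circleIntegral.integral_sub_zpow_of_ne (by omega) _ _ _
    rw [h2, if_neg hj]
    simp

/-- Laurent coefficients at `z = 1` of the inverse pencil `(I - z A₁)⁻¹`:
`N j = -(1/(2πi)) ∮_{|z-1|=r} (I - z A₁)⁻¹ (z-1)^{-j-1} dz`. -/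
noncomputable def laurentN {B : Type*} [NormedAddCommGroup B] [NormedSpace ℂ B]
    (A₁ : B →L[ℂ] B) (r : ℝ) (j : ℤ) : B →L[ℂ] B :=
  (-(2 * (Real.pi : ℂ) * Complex.I)⁻¹) •
    circleIntegral (fun z => (z - 1) ^ (-j - 1) • Ring.inverse (1 - z • A₁)) 1 r

/-- under the unit-root assumption, the expansion of the identity holds:
`N_{j-1} A₁ - N_j (I - A₁) = δ_{j,0} I` and `A₁ N_{j-1} - (I - A₁) N_j = δ_{j,0} I`. -/
theorem statement1
    {B : Type*} [NormedAddCommGroup B] [NormedSpace ℂ B] [CompleteSpace B]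
    (A₁ : B →L[ℂ] B) (η : ℝ) (hη : 0 < η)
    (hinv : ∀ z : ℂ, ‖z‖ < 1 + η → z ≠ 1 → IsUnit (1 - z • A₁))
    (hnot : ¬ IsUnit (1 - A₁))
    (r : ℝ) (hr0 : 0 < r) (hrη : r < η) (j : ℤ) :
    laurentN A₁ r (j - 1) * A₁ - laurentN A₁ r j * (1 - A₁)
        = (if j = 0 then 1 else 0) ∧
    A₁ * laurentN A₁ r (j - 1) - (1 - A₁) * laurentN A₁ r j
        = (if j = 0 then 1 else 0) := by
  set g : ℂ → (B →L[ℂ] B) := fun z => Ring.inverse (1 - z • A₁) with hg_def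
  have hunit : ∀ z ∈ sphere (1 : ℂ) r, IsUnit (1 - z • A₁) := by
    intro z hz
    rw [mem_sphere_iff_norm] at hz
    have hz1 : z ≠ 1 := by
      intro h; rw [h, sub_self, norm_zero] at hz; exact hr0.ne hz
    refine hinv z ?_ hz1
    calc ‖z‖ = ‖(z - 1) + 1‖ := by norm_num
      _ ≤ ‖z - 1‖ + ‖(1:ℂ)‖ := norm_add_le _ _
      _ = r + 1 := by rw [hz, norm_one]
      _ < 1 + η := by linarith
  have hne : ∀ z ∈ sphere (1 : ℂ) r, z - 1 ≠ 0 := by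
    intro z hz h
    rw [mem_sphere_iff_norm, h, norm_zero] at hz
    exact hr0.ne hz
  have hg : ContinuousOn g (sphere (1 : ℂ) r) := by
    intro z hz
    have hcont : ContinuousAt (fun z : ℂ => 1 - z • A₁) z :=
      (continuousAt_const.sub (continuousAt_id.smul continuousAt_const))
    have h1 : ContinuousAt Ring.inverse (1 - z • A₁) := by
      have := NormedRing.inverse_continuousAt (hunit z hz).unit
      rwa [IsUnit.unit_spec] at this
    exact (ContinuousAt.comp (x := z) h1 hcont).continuousWithinAt
  have hcz : ∀ n : ℤ, ContinuousOn (fun z : ℂ => (z - 1) ^ n) (sphere (1 : ℂ) r) := by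
    intro n
    exact (continuousOn_id.sub continuousOn_const).zpow₀ n fun z hz => Or.inl (hne z hz)
  have hint : ∀ n : ℤ, CircleIntegrable (fun z => (z - 1) ^ n • g z) 1 r := fun n =>
    ((hcz n).smul hg).circleIntegrable hr0.le
  have hkey : ∀ z ∈ sphere (1 : ℂ) r,
      ((z - 1) • A₁ - (1 - A₁)) = -(1 - z • A₁) := by
    intro z hz
    rw [sub_smul, one_smul]
    abel
  have hjj : -(j - 1) - 1 = -j := by ring
  constructor
  · -- right multiplication
    have hmulr : ∀ (T : B →L[ℂ] B) (n : ℤ),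
        laurentN A₁ r n * T
          = (-(2 * (Real.pi : ℂ) * Complex.I)⁻¹) •
              (∮ z in C(1, r), (z - 1) ^ (-n - 1) • (g z * T)) := by
      intro T n
      have L := (ContinuousLinearMap.mul ℂ (B →L[ℂ] B)).flip T
      rw [laurentN, smul_mul_assoc]
      congr 1
      have := clm_circleIntegral_comp_comm ((ContinuousLinearMap.mul ℂ (B →L[ℂ] B)).flip T)
        (hint (-n - 1))
      simp only [ContinuousLinearMap.flip_apply, ContinuousLinearMap.mul_apply',
        ContinuousLinearMap.map_smul] at this
      exact this
    rw [hmulr A₁ (j - 1), hmulr (1 - A₁) j, hjj]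
    refine aux_integral r hr0 _ _ (hg.mul continuousOn_const) (hg.mul continuousOn_const)
      (fun z hz => ?_) j
    calc (z - 1) • (g z * A₁) - g z * (1 - A₁)
        = g z * ((z - 1) • A₁ - (1 - A₁)) := by
          simp only [mul_sub, mul_smul_comm, mul_one]
      _ = g z * (-(1 - z • A₁)) := by rw [hkey z hz]
      _ = -(g z * (1 - z • A₁)) := by rw [mul_neg]
      _ = -1 := by rw [hg_def, Ring.inverse_mul_cancel _ (hunit z hz)]
  · -- left multiplication
    have hmull : ∀ (T : B →L[ℂ] B) (n : ℤ),
        T * laurentN A₁ r n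
          = (-(2 * (Real.pi : ℂ) * Complex.I)⁻¹) •
              (∮ z in C(1, r), (z - 1) ^ (-n - 1) • (T * g z)) := by
      intro T n
      rw [laurentN, mul_smul_comm]
      congr 1
      have := clm_circleIntegral_comp_comm (ContinuousLinearMap.mul ℂ (B →L[ℂ] B) T)
        (hint (-n - 1))
      simp only [ContinuousLinearMap.mul_apply', ContinuousLinearMap.map_smul] at this
      exact this
    rw [hmull A₁ (j - 1), hmull (1 - A₁) j, hjj]
    refine aux_integral r hr0 _ _ (continuousOn_const.mul hg) (continuousOn_const.mul hg)
      (fun z hz => ?_) j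
    calc (z - 1) • (A₁ * g z) - (1 - A₁) * g z
        = ((z - 1) • A₁ - (1 - A₁)) * g z := by
          simp only [sub_mul, smul_mul_assoc, one_mul]
      _ = (-(1 - z • A₁)) * g z := by rw [hkey z hz]
      _ = -((1 - z • A₁) * g z) := by rw [neg_mul]
      _ = -1 := by rw [hg_def, Ring.mul_inverse_cancel _ (hunit z hz)]
end

section
/- Under the unit-root assumption, for all j, k ∈ ℤ one has N_j A₁ N_k = (1 − η_j − η_k) N_{j+k+1}, where η_j = 1 if j ≥ 0 and η_j = 0 if j < 0. Consequently N_{−1}A₁ is idempotent: (N_{−1}A₁)² = N_{−1}A₁. -/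
open Complex Metric Set MeasureTheory Real

section Aux

variable {E : Type*} [NormedAddCommGroup E] [NormedSpace ℂ E]

/-- Fubini for iterated interval integrals of a continuous function. -/
lemma my_interval_swap (H : ℝ → ℝ → E) (hH : Continuous fun p : ℝ × ℝ => H p.1 p.2)
    {a b : ℝ} (hab : a ≤ b) :
    (∫ x in a..b, ∫ y in a..b, H x y) = ∫ y in a..b, ∫ x in a..b, H x y := by
  have hint : Integrable (Function.uncurry H)
      ((volume.restrict (Ioc a b)).prod (volume.restrict (Ioc a b))) := by
    rw [Measure.prod_restrict]
    exact ((hH.continuousOn.integrableOn_compact (isCompact_Icc.prod isCompact_Icc)).mono_set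
      (prod_mono Ioc_subset_Icc_self Ioc_subset_Icc_self))
  simp only [intervalIntegral.integral_of_le hab]
  exact MeasureTheory.integral_integral_swap hint

/-- Fubini for iterated circle integrals. -/
lemma my_circle_swap (f : ℂ → ℂ → E) (c₁ c₂ : ℂ) (R₁ R₂ : ℝ)
    (hf : Continuous fun p : ℝ × ℝ => f (circleMap c₁ R₁ p.1) (circleMap c₂ R₂ p.2)) :
    (∮ z in C(c₁, R₁), ∮ w in C(c₂, R₂), f z w)
      = ∮ w in C(c₂, R₂), ∮ z in C(c₁, R₁), f z w := by
  simp only [circleIntegral, ← intervalIntegral.integral_smul]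
  rw [my_interval_swap _ ?_ Real.two_pi_pos.le]
  · exact intervalIntegral.integral_congr fun φ _ =>
      intervalIntegral.integral_congr fun θ _ => smul_comm _ _ _
  · simp only [deriv_circleMap]
    exact ((((continuous_circleMap 0 R₁).comp continuous_fst).mul continuous_const).smul
      ((((continuous_circleMap 0 R₂).comp continuous_snd).mul continuous_const).smul hf))

lemma my_clm_comm {F' : Type*} [NormedAddCommGroup F'] [NormedSpace ℂ F'] [CompleteSpace F']
    [CompleteSpace E] (L : E →L[ℂ] F') {f : ℂ → E} {c : ℂ} {R : ℝ}
    (hf : CircleIntegrable f c R) :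
    L (∮ z in C(c, R), f z) = ∮ z in C(c, R), L (f z) := by
  simp only [circleIntegral]
  rw [← L.intervalIntegral_comp_comm hf.out]
  simp

end Aux

section Scalar

lemma my_two_pi_I_ne : (2 * (π:ℝ) * I : ℂ) ≠ 0 := by
  simp [Real.pi_ne_zero, I_ne_zero]

lemma my_ne_of_sphere {c z : ℂ} {ρ : ℝ} (hρ : 0 < ρ) (hz : z ∈ sphere c ρ) : z ≠ c := by
  intro h; subst h
  simp only [mem_sphere, dist_self] at hz
  exact hρ.ne hz

lemma my_ne_of_ball {c z w : ℂ} {ρ : ℝ} (hz : z ∈ sphere c ρ) (hw : w ∈ ball c ρ) : z ≠ w := by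
  intro h; subst h
  exact absurd (mem_ball.mp hw) (not_lt.2 (le_of_eq (mem_sphere.mp hz).symm))

lemma my_ci (n : ℤ) (c w : ℂ) {ρ : ℝ} (hρ : 0 < ρ) (hw : ∀ x ∈ sphere c ρ, x ≠ w) :
    CircleIntegrable (fun z => (z - c) ^ n * (z - w)⁻¹) c ρ := by
  apply ContinuousOn.circleIntegrable hρ.le
  intro x hx
  have hxc : x - c ≠ 0 := sub_ne_zero.2 (my_ne_of_sphere hρ hx)
  exact (((continuousAt_id.sub continuousAt_const).zpow₀ n (Or.inl hxc)).mul
    ((continuousAt_id.sub continuousAt_const).inv₀ (sub_ne_zero.2 (hw x hx)))).continuousWithinAt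

lemma my_ci_zpow (m : ℤ) (c : ℂ) {ρ : ℝ} (hρ : 0 < ρ) :
    CircleIntegrable (fun z => (z - c) ^ m) c ρ := by
  rw [circleIntegrable_sub_zpow_iff]
  right; right
  simp [abs_of_pos hρ, hρ.ne]

lemma my_circle_add {E : Type*} [NormedAddCommGroup E] [NormedSpace ℂ E]
    {f g : ℂ → E} {c : ℂ} {R : ℝ} (hf : CircleIntegrable f c R)
    (hg : CircleIntegrable g c R) :
    (∮ z in C(c, R), (f z + g z)) = (∮ z in C(c, R), f z) + ∮ z in C(c, R), g z := by
  simp only [circleIntegral, smul_add, intervalIntegral.integral_add hf.out hg.out]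

lemma my_pf1 {z c w : ℂ} (hzc : z ≠ c) (hzw : z ≠ w) (hwc : w ≠ c) (m : ℤ) :
    (z - c) ^ (m - 1) * (z - w)⁻¹
      = (w - c)⁻¹ * ((z - c) ^ m * (z - w)⁻¹ - (z - c) ^ (m - 1)) := by
  have h1 : z - c ≠ 0 := sub_ne_zero.2 hzc
  have h2 : z - w ≠ 0 := sub_ne_zero.2 hzw
  have h3 : w - c ≠ 0 := sub_ne_zero.2 hwc
  have h4 : (z - c) ^ m ≠ 0 := zpow_ne_zero _ h1
  rw [zpow_sub_one₀ h1]
  field_simp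
  ring

lemma my_pf2 {w c z : ℂ} (hwc : w ≠ c) (hwz : w ≠ z) (hzc : z ≠ c) (m : ℤ) :
    (w - c) ^ (m - 1) * (z - w)⁻¹
      = (z - c)⁻¹ * ((w - c) ^ (m - 1) + (w - c) ^ m * (z - w)⁻¹) := by
  have h1 : w - c ≠ 0 := sub_ne_zero.2 hwc
  have h2 : z - w ≠ 0 := sub_ne_zero.2 (fun h => hwz (by linear_combination -h))
  have h3 : z - c ≠ 0 := sub_ne_zero.2 hzc
  have h4 : (w - c) ^ m ≠ 0 := zpow_ne_zero _ h1
  rw [zpow_sub_one₀ h1]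
  field_simp
  ring

/-- Cauchy–Goursat: `(z-w)⁻¹` integrates to zero over a circle not enclosing `z`. -/
lemma my_inv_out {c z : ℂ} {ρ : ℝ} (hρ : 0 < ρ) (hz : z ∉ closedBall c ρ) :
    (∮ w in C(c, ρ), (z - w)⁻¹) = 0 := by
  have hdiff : ∀ w ∈ closedBall c ρ, DifferentiableAt ℂ (fun w => (z - w)⁻¹) w := by
    intro w hw
    have : z - w ≠ 0 := sub_ne_zero.2 (fun h => hz (h ▸ hw))
    exact ((differentiable_const z).sub differentiable_id).differentiableAt.inv this
  exact Complex.circleIntegral_eq_zero_of_differentiable_on_off_countable hρ.le countable_empty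
    (fun w hw => ((hdiff w hw).continuousAt).continuousWithinAt)
    (fun w hw => hdiff w (ball_subset_closedBall hw.1))

lemma my_S_out_neg {c w : ℂ} {ρ : ℝ} (hρ : 0 < ρ) (hw : w ∈ ball c ρ) (hwc : w ≠ c) :
    ∀ p : ℕ, (∮ z in C(c, ρ), (z - c) ^ (-(p:ℤ) - 1) * (z - w)⁻¹) = 0 := by
  have hwsp : ∀ x ∈ sphere c ρ, x ≠ w := fun x hx => my_ne_of_ball hx hw
  intro p; induction p with
  | zero =>
    have hcongr : EqOn (fun z => (z - c) ^ (-((0:ℕ):ℤ) - 1) * (z - w)⁻¹)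
        (fun z => (w - c)⁻¹ * ((z - c) ^ (0:ℤ) * (z - w)⁻¹ - (z - c) ^ ((0:ℤ) - 1)))
        (sphere c ρ) := by
      intro z hz
      have h := my_pf1 (my_ne_of_sphere hρ hz) (hwsp z hz) hwc (0:ℤ)
      simpa using h
    rw [circleIntegral.integral_congr hρ.le hcongr, circleIntegral.integral_const_mul,
      circleIntegral.integral_sub (by simpa using my_ci 0 c w hρ hwsp) (my_ci_zpow _ c hρ)]
    have e1 : (∮ z in C(c, ρ), (z - c) ^ (0:ℤ) * (z - w)⁻¹) = 2 * π * I := by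
      rw [circleIntegral.integral_congr hρ.le (g := fun z => (z - w)⁻¹) (fun z hz => by simp)]
      exact circleIntegral.integral_sub_inv_of_mem_ball hw
    have e2 : (∮ z in C(c, ρ), (z - c) ^ ((0:ℤ) - 1)) = 2 * π * I := by
      rw [show ((0:ℤ) - 1) = -1 by ring]
      simp only [zpow_neg_one]
      exact circleIntegral.integral_sub_center_inv c hρ.ne'
    rw [e1, e2]; ring
  | succ p ih =>
    have hcongr : EqOn (fun z => (z - c) ^ (-((p+1:ℕ):ℤ) - 1) * (z - w)⁻¹)
        (fun z => (w - c)⁻¹ * ((z - c) ^ (-(p:ℤ) - 1) * (z - w)⁻¹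
          - (z - c) ^ ((-(p:ℤ) - 1) - 1))) (sphere c ρ) := by
      intro z hz
      have h := my_pf1 (my_ne_of_sphere hρ hz) (hwsp z hz) hwc (-(p:ℤ) - 1)
      rw [show (-((p+1:ℕ):ℤ) - 1) = (-(p:ℤ) - 1) - 1 by push_cast; ring]
      exact h
    rw [circleIntegral.integral_congr hρ.le hcongr, circleIntegral.integral_const_mul,
      circleIntegral.integral_sub (my_ci _ c w hρ hwsp) (my_ci_zpow _ c hρ), ih,
      circleIntegral.integral_sub_zpow_of_ne (by omega) c c ρ]
    ring

lemma my_S_out (n : ℤ) {c w : ℂ} {ρ : ℝ} (hρ : 0 < ρ) (hw : w ∈ ball c ρ) (hwc : w ≠ c) :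
    (∮ z in C(c, ρ), (z - c) ^ n * (z - w)⁻¹)
      = if 0 ≤ n then 2 * π * I * (w - c) ^ n else 0 := by
  by_cases hn : 0 ≤ n
  · rw [if_pos hn]
    lift n to ℕ using hn
    have hd : ∀ x ∈ ball c ρ \ (∅ : Set ℂ), DifferentiableAt ℂ (fun z => (z - c) ^ (n:ℕ)) x :=
      fun x _ => (differentiableAt_id.sub (differentiableAt_const c)).pow n
    have hcont : ContinuousOn (fun z => (z - c) ^ (n:ℕ)) (closedBall c ρ) :=
      ((continuous_id.sub continuous_const).pow n).continuousOn
    have h := Complex.two_pi_I_inv_smul_circleIntegral_sub_inv_smul_of_differentiable_on_off_countable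
      countable_empty hw hcont hd
    rw [inv_smul_eq_iff₀ my_two_pi_I_ne] at h
    have h2 : (∮ z in C(c, ρ), (z - c) ^ ((n:ℕ):ℤ) * (z - w)⁻¹)
        = ∮ z in C(c, ρ), (z - w)⁻¹ • (z - c) ^ (n:ℕ) :=
      circleIntegral.integral_congr hρ.le fun z hz => by
        simp [smul_eq_mul, zpow_natCast, mul_comm]
    rw [h2, h, smul_eq_mul, zpow_natCast]
  · rw [if_neg hn]
    obtain ⟨p, rfl⟩ : ∃ p : ℕ, n = -(p:ℤ) - 1 := ⟨(-n-1).toNat, by omega⟩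
    exact my_S_out_neg hρ hw hwc p

lemma my_S_in_neg {c z : ℂ} {ρ : ℝ} (hρ : 0 < ρ) (hz : z ∉ closedBall c ρ) :
    ∀ q : ℕ, (∮ w in C(c, ρ), (w - c) ^ (-(q:ℤ) - 1) * (z - w)⁻¹)
      = 2 * π * I * (z - c) ^ (-(q:ℤ) - 1) := by
  have hzc : z ≠ c := fun h => hz (h ▸ mem_closedBall_self hρ.le)
  have hzsp : ∀ x ∈ sphere c ρ, x ≠ z := by
    intro x hx h
    exact hz (h ▸ sphere_subset_closedBall hx)
  have hzball : ∀ x ∈ sphere c ρ, z - x ≠ 0 :=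
    fun x hx => sub_ne_zero.2 fun h => hzsp x hx (by linear_combination -h)
  have hinv0 : (∮ w in C(c, ρ), (z - w)⁻¹) = 0 := my_inv_out hρ hz
  have hciz : ∀ m : ℤ, CircleIntegrable (fun w => (w - c) ^ m * (z - w)⁻¹) c ρ := by
    intro m
    apply ContinuousOn.circleIntegrable hρ.le
    intro x hx
    have hxc : x - c ≠ 0 := sub_ne_zero.2 (my_ne_of_sphere hρ hx)
    exact (((continuousAt_id.sub continuousAt_const).zpow₀ m (Or.inl hxc)).mul
      ((continuousAt_const.sub continuousAt_id).inv₀ (hzball x hx))).continuousWithinAt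
  intro q; induction q with
  | zero =>
    have hcongr : EqOn (fun w => (w - c) ^ (-((0:ℕ):ℤ) - 1) * (z - w)⁻¹)
        (fun w => (z - c)⁻¹ * ((w - c) ^ ((0:ℤ) - 1) + (w - c) ^ (0:ℤ) * (z - w)⁻¹))
        (sphere c ρ) := by
      intro w hw
      have h := my_pf2 (my_ne_of_sphere hρ hw) (hzsp w hw) hzc (0:ℤ)
      simpa using h
    rw [circleIntegral.integral_congr hρ.le hcongr, circleIntegral.integral_const_mul,
      my_circle_add (my_ci_zpow _ c hρ) (by simpa using hciz 0)]
    have e1 : (∮ w in C(c, ρ), (w - c) ^ ((0:ℤ) - 1)) = 2 * π * I := by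
      rw [show ((0:ℤ) - 1) = -1 by ring]
      simp only [zpow_neg_one]
      exact circleIntegral.integral_sub_center_inv c hρ.ne'
    have e2 : (∮ w in C(c, ρ), (w - c) ^ (0:ℤ) * (z - w)⁻¹) = 0 := by
      rw [circleIntegral.integral_congr hρ.le (g := fun w => (z - w)⁻¹) (fun w hw => by simp)]
      exact hinv0
    rw [e1, e2]
    have h3 : z - c ≠ 0 := sub_ne_zero.2 hzc
    rw [show (-((0:ℕ):ℤ) - 1) = -1 by norm_num, zpow_neg_one]
    ring
  | succ q ih =>
    have hcongr : EqOn (fun w => (w - c) ^ (-((q+1:ℕ):ℤ) - 1) * (z - w)⁻¹)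
        (fun w => (z - c)⁻¹ * ((w - c) ^ ((-(q:ℤ) - 1) - 1)
          + (w - c) ^ (-(q:ℤ) - 1) * (z - w)⁻¹)) (sphere c ρ) := by
      intro w hw
      have h := my_pf2 (my_ne_of_sphere hρ hw) (hzsp w hw) hzc (-(q:ℤ) - 1)
      rw [show (-((q+1:ℕ):ℤ) - 1) = (-(q:ℤ) - 1) - 1 by push_cast; ring]
      exact h
    rw [circleIntegral.integral_congr hρ.le hcongr, circleIntegral.integral_const_mul,
      my_circle_add (my_ci_zpow _ c hρ) (hciz _), ih,
      circleIntegral.integral_sub_zpow_of_ne (by omega) c c ρ]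
    have h3 : z - c ≠ 0 := sub_ne_zero.2 hzc
    rw [show (-((q+1:ℕ):ℤ) - 1) = (-(q:ℤ) - 1) - 1 by push_cast; ring,
      zpow_sub_one₀ h3 (-(q:ℤ) - 1)]
    ring

lemma my_S_in (n : ℤ) {c z : ℂ} {ρ : ℝ} (hρ : 0 < ρ) (hz : z ∉ closedBall c ρ) :
    (∮ w in C(c, ρ), (w - c) ^ n * (z - w)⁻¹)
      = if 0 ≤ n then 0 else 2 * π * I * (z - c) ^ n := by
  by_cases hn : 0 ≤ n
  · rw [if_pos hn]
    lift n to ℕ using hn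
    have hdiff : ∀ w ∈ closedBall c ρ,
        DifferentiableAt ℂ (fun w => (w - c) ^ (n:ℕ) * (z - w)⁻¹) w := by
      intro w hw
      have hzw : z - w ≠ 0 := sub_ne_zero.2 (fun h => hz (h ▸ hw))
      exact ((differentiableAt_id.sub (differentiableAt_const c)).pow n).mul
        (((differentiable_const z).sub differentiable_id).differentiableAt.inv hzw)
    have h0 : (∮ w in C(c, ρ), (w - c) ^ (n:ℕ) * (z - w)⁻¹) = 0 :=
      Complex.circleIntegral_eq_zero_of_differentiable_on_off_countable hρ.le countable_empty
        (fun w hw => ((hdiff w hw).continuousAt).continuousWithinAt)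
        (fun w hw => hdiff w (ball_subset_closedBall hw.1))
    rw [← h0]
    exact circleIntegral.integral_congr hρ.le fun w hw => by simp [zpow_natCast]
  · rw [if_neg hn]
    obtain ⟨q, rfl⟩ : ∃ q : ℕ, n = -(q:ℤ) - 1 := ⟨(-n-1).toNat, by omega⟩
    exact my_S_in_neg hρ hz q

end Scalar

section Op

variable {B : Type*} [NormedAddCommGroup B] [NormedSpace ℂ B] [CompleteSpace B]

lemma my_resolvent (A₁ : B →L[ℂ] B) {z w : ℂ} (hz : IsUnit (1 - z • A₁))
    (hw : IsUnit (1 - w • A₁)) (hzw : z ≠ w) :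
    Ring.inverse (1 - z • A₁) * A₁ * Ring.inverse (1 - w • A₁)
      = (z - w)⁻¹ • (Ring.inverse (1 - z • A₁) - Ring.inverse (1 - w • A₁)) := by
  set u := Ring.inverse (1 - z • A₁) with hu'
  set v := Ring.inverse (1 - w • A₁) with hv'
  have hu : u * (1 - z • A₁) = 1 := Ring.inverse_mul_cancel _ hz
  have hv : (1 - w • A₁) * v = 1 := Ring.mul_inverse_cancel _ hw
  have e2 : (1 - w • A₁) - (1 - z • A₁) = (z - w) • A₁ := by
    rw [sub_smul]; abel
  have e1 : u * ((1 - w • A₁) - (1 - z • A₁)) * v = u - v := by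
    rw [mul_sub, sub_mul, mul_assoc u _ v, hv, mul_one, hu, one_mul]
  have key : (z - w) • (u * A₁ * v) = u - v := by
    rw [← e1, e2, mul_smul_comm, smul_mul_assoc]
  rw [← key, inv_smul_smul₀ (sub_ne_zero.2 hzw)]

variable (A₁ : B →L[ℂ] B) {η : ℝ}

lemma my_Fdiff (hinv : ∀ z : ℂ, ‖z‖ < 1 + η → z ≠ 1 → IsUnit (1 - z • A₁))
    {z : ℂ} (h1 : ‖z‖ < 1 + η) (h2 : z ≠ 1) :
    DifferentiableAt ℂ (fun z : ℂ => Ring.inverse (1 - z • A₁)) z :=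
  DifferentiableAt.inverse
    ((differentiableAt_const _).sub (differentiableAt_id.smul_const A₁)) (hinv z h1 h2)

lemma my_circle_mem {ρ : ℝ} (hρ0 : 0 < ρ) (hρη : ρ < η) (θ : ℝ) :
    ‖circleMap 1 ρ θ‖ < 1 + η ∧ circleMap 1 ρ θ ≠ 1 := by
  have h1 : ‖circleMap 1 ρ θ - 1‖ = ρ := by
    rw [circleMap_sub_center, norm_circleMap_zero, abs_of_pos hρ0]
  constructor
  · calc ‖circleMap 1 ρ θ‖
        = ‖(circleMap 1 ρ θ - 1) + 1‖ := by ring_nf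
      _ ≤ ‖circleMap 1 ρ θ - 1‖ + ‖(1:ℂ)‖ := norm_add_le _ _
      _ = ρ + 1 := by rw [h1]; norm_num
      _ < 1 + η := by linarith
  · intro h
    rw [h] at h1
    simp at h1
    exact hρ0.ne h1

lemma my_sphere_mem {ρ : ℝ} (hρ0 : 0 < ρ) (hρη : ρ < η) {z : ℂ} (hz : z ∈ sphere (1:ℂ) ρ) :
    ‖z‖ < 1 + η ∧ z ≠ 1 := by
  have h1 : ‖z - 1‖ = ρ := by
    rw [← Complex.dist_eq]; exact mem_sphere.mp hz
  constructor
  · calc ‖z‖ = ‖(z - 1) + 1‖ := by ring_nf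
      _ ≤ ‖z - 1‖ + ‖(1:ℂ)‖ := norm_add_le _ _
      _ = ρ + 1 := by rw [h1]; norm_num
      _ < 1 + η := by linarith
  · intro h
    rw [h] at h1; simp at h1; exact hρ0.ne h1

lemma my_Fcont (hinv : ∀ z : ℂ, ‖z‖ < 1 + η → z ≠ 1 → IsUnit (1 - z • A₁))
    {ρ : ℝ} (hρ0 : 0 < ρ) (hρη : ρ < η) :
    Continuous fun θ : ℝ => Ring.inverse (1 - circleMap 1 ρ θ • A₁) := by
  rw [continuous_iff_continuousAt]
  intro θ
  obtain ⟨h1, h2⟩ := my_circle_mem (η := η) hρ0 hρη θ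
  exact ((my_Fdiff A₁ hinv h1 h2).continuousAt).comp (continuous_circleMap 1 ρ).continuousAt

lemma my_cont_zpow (c : ℂ) {ρ : ℝ} (hρ : ρ ≠ 0) (m : ℤ) :
    Continuous fun θ : ℝ => (circleMap c ρ θ - c) ^ m := by
  rw [continuous_iff_continuousAt]
  intro θ
  refine (((continuous_circleMap c ρ).continuousAt).sub continuousAt_const).zpow₀ m (Or.inl ?_)
  rw [Pi.sub_apply, sub_ne_zero]
  exact circleMap_ne_center hρ

lemma my_diff_all (hinv : ∀ z : ℂ, ‖z‖ < 1 + η → z ≠ 1 → IsUnit (1 - z • A₁))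
    (m : ℤ) {z : ℂ} (h1 : ‖z‖ < 1 + η) (h2 : z ≠ 1) :
    DifferentiableAt ℂ (fun z : ℂ => (z - 1) ^ m • Ring.inverse (1 - z • A₁)) z := by
  refine DifferentiableAt.fun_smul ?_ (my_Fdiff A₁ hinv h1 h2)
  exact (differentiableAt_zpow.mpr (Or.inl (sub_ne_zero.2 h2))).comp z
    (differentiableAt_id.sub_const 1)

lemma my_ciF (hinv : ∀ z : ℂ, ‖z‖ < 1 + η → z ≠ 1 → IsUnit (1 - z • A₁))
    (a : ℂ) (m : ℤ) {ρ : ℝ} (hρ0 : 0 < ρ) (hρη : ρ < η) :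
    CircleIntegrable (fun z => (a * (z - 1) ^ m) • Ring.inverse (1 - z • A₁)) 1 ρ := by
  apply ContinuousOn.circleIntegrable hρ0.le
  intro x hx
  obtain ⟨h1, h2⟩ := my_sphere_mem (η := η) hρ0 hρη hx
  refine ContinuousAt.continuousWithinAt ?_
  refine ContinuousAt.fun_smul (continuousAt_const.fun_mul ?_) ((my_Fdiff A₁ hinv h1 h2).continuousAt)
  exact ((continuousAt_id.sub continuousAt_const).zpow₀ m (Or.inl (sub_ne_zero.2 h2)))

lemma my_radius (hinv : ∀ z : ℂ, ‖z‖ < 1 + η → z ≠ 1 → IsUnit (1 - z • A₁))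
    (m : ℤ) {r R : ℝ} (hr0 : 0 < r) (hrR : r ≤ R) (hRη : R < η) :
    (∮ z in C(1, R), (z - 1) ^ m • Ring.inverse (1 - z • A₁))
      = ∮ z in C(1, r), (z - 1) ^ m • Ring.inverse (1 - z • A₁) := by
  have hball : ∀ z ∈ closedBall (1:ℂ) R \ ball (1:ℂ) r,
      ‖z‖ < 1 + η ∧ z ≠ 1 := by
    intro z hz
    have hzR : dist z 1 ≤ R := mem_closedBall.mp hz.1
    have hzr : r ≤ dist z 1 := not_lt.mp fun h => hz.2 (mem_ball.mpr h)
    have h1 : ‖z - 1‖ ≤ R := by rwa [← Complex.dist_eq]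
    constructor
    · calc ‖z‖ = ‖(z - 1) + 1‖ := by ring_nf
        _ ≤ ‖z - 1‖ + ‖(1:ℂ)‖ := norm_add_le _ _
        _ ≤ R + 1 := by simp [h1]
        _ < 1 + η := by linarith
    · intro h
      rw [h] at hzr; simp at hzr; linarith
  refine Complex.circleIntegral_eq_of_differentiable_on_annulus_off_countable hr0 hrR
    countable_empty ?_ ?_
  · intro z hz
    obtain ⟨h1, h2⟩ := hball z hz
    exact (my_diff_all A₁ hinv m h1 h2).continuousAt.continuousWithinAt
  · intro z hz
    obtain ⟨h1, h2⟩ := hball z ⟨ball_subset_closedBall hz.1.1, fun h =>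
      hz.1.2 (ball_subset_closedBall h)⟩
    exact my_diff_all A₁ hinv m h1 h2

end Op

section Main

variable {B : Type*} [NormedAddCommGroup B] [NormedSpace ℂ B] [CompleteSpace B]

lemma my_int_mul_right {f : ℂ → (B →L[ℂ] B)} {c : ℂ} {ρ : ℝ}
    (hf : CircleIntegrable f c ρ) (C : B →L[ℂ] B) :
    (∮ z in C(c, ρ), f z) * C = ∮ z in C(c, ρ), f z * C := by
  have := my_clm_comm ((ContinuousLinearMap.mul ℂ (B →L[ℂ] B)).flip C) hf
  simpa using this

lemma my_int_mul_left {f : ℂ → (B →L[ℂ] B)} {c : ℂ} {ρ : ℝ}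
    (hf : CircleIntegrable f c ρ) (C : B →L[ℂ] B) :
    C * (∮ z in C(c, ρ), f z) = ∮ z in C(c, ρ), C * f z := by
  have := my_clm_comm (ContinuousLinearMap.mul ℂ (B →L[ℂ] B) C) hf
  simpa using this


lemma my_main (A₁ : B →L[ℂ] B) {η : ℝ} (hη : 0 < η)
    (hinv : ∀ z : ℂ, ‖z‖ < 1 + η → z ≠ 1 → IsUnit (1 - z • A₁))
    {r R : ℝ} (hr0 : 0 < r) (hrR : r < R) (hRη : R < η) (j k : ℤ) :
    laurentN A₁ r j * A₁ * laurentN A₁ r k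
      = ((1 : ℂ) - (if 0 ≤ j then 1 else 0) - (if 0 ≤ k then 1 else 0)) •
          laurentN A₁ r (j + k + 1) := by
  have hR0 : 0 < R := hr0.trans hrR
  have hrη : r < η := hrR.trans hRη
  set F : ℂ → (B →L[ℂ] B) := fun z => Ring.inverse (1 - z • A₁) with hF
  set K : ℂ := -(2 * (Real.pi : ℂ) * Complex.I)⁻¹ with hK
  -- basic nonvanishing facts
  have h2πI : (2 * (π:ℝ) * I : ℂ) ≠ 0 := my_two_pi_I_ne
  have hzw_ne : ∀ z ∈ sphere (1:ℂ) R, ∀ w ∈ sphere (1:ℂ) r, z ≠ w := by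
    intro z hz w hw h
    have h1 : dist z 1 = R := mem_sphere.mp hz
    have h2 : dist w 1 = r := mem_sphere.mp hw
    rw [h, h2] at h1
    exact (ne_of_lt hrR) h1
  -- integrands
  set f : ℂ → (B →L[ℂ] B) := fun z => (z - 1) ^ (-j - 1) • F z with hf
  set g : ℂ → (B →L[ℂ] B) := fun w => (w - 1) ^ (-k - 1) • F w with hg
  set ψ : ℂ → ℂ → ℂ :=
    fun z w => (z - 1) ^ (-j - 1) * ((w - 1) ^ (-k - 1) * (z - w)⁻¹) with hψ
  set J : B →L[ℂ] B := ∮ z in C(1, r), (z - 1) ^ (-(j + k + 1) - 1) • F z with hJ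
  have hfint : CircleIntegrable f 1 R := by
    have := my_ciF A₁ hinv 1 (-j - 1) hR0 hRη
    simpa [hf, hF] using this
  have hgint : CircleIntegrable g 1 r := by
    have := my_ciF A₁ hinv 1 (-k - 1) hr0 hrη
    simpa [hg, hF] using this
  -- joint continuity of the second-term integrand
  have hcontprod : Continuous fun p : ℝ × ℝ =>
      ψ (circleMap 1 R p.1) (circleMap 1 r p.2) • F (circleMap 1 r p.2) := by
    refine Continuous.fun_smul (Continuous.fun_mul ?_ (Continuous.fun_mul ?_ ?_)) ?_
    · exact (my_cont_zpow 1 hR0.ne' (-j - 1)).comp continuous_fst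
    · exact (my_cont_zpow 1 hr0.ne' (-k - 1)).comp continuous_snd
    · rw [continuous_iff_continuousAt]
      intro p
      refine ContinuousAt.inv₀ ?_ ?_
      · exact (((continuous_circleMap 1 R).comp continuous_fst).sub
          ((continuous_circleMap 1 r).comp continuous_snd)).continuousAt
      · exact sub_ne_zero.2 (hzw_ne _ (circleMap_mem_sphere 1 hR0.le p.1) _
          (circleMap_mem_sphere 1 hr0.le p.2))
    · exact (my_Fcont A₁ hinv hr0 hrη).comp continuous_snd
  -- the inner second-term integral as a function of z
  set H : ℂ → (B →L[ℂ] B) := fun z => ∮ w in C(1, r), ψ z w • F w with hH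
  have hHcont : Continuous fun θ : ℝ => H (circleMap 1 R θ) := by
    have heq : (fun θ : ℝ => H (circleMap 1 R θ)) = fun θ : ℝ =>
        ∫ φ in (0:ℝ)..(2 * π), deriv (circleMap 1 r) φ •
          (ψ (circleMap 1 R θ) (circleMap 1 r φ) • F (circleMap 1 r φ)) := rfl
    rw [heq]
    apply intervalIntegral.continuous_parametric_intervalIntegral_of_continuous'
    show Continuous fun p : ℝ × ℝ => deriv (circleMap 1 r) p.2 •
      (ψ (circleMap 1 R p.1) (circleMap 1 r p.2) • F (circleMap 1 r p.2))
    simp only [deriv_circleMap]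
    exact (((continuous_circleMap 0 r).comp continuous_snd).mul continuous_const).smul hcontprod
  have hHint : CircleIntegrable H 1 R := hHcont.intervalIntegrable _ _
  -- step 1 : the double integral representation
  have h1 : (∮ z in C(1, R), f z) * A₁ * (∮ w in C(1, r), g w)
      = ∮ z in C(1, R), (∮ w in C(1, r), f z * A₁ * g w) := by
    rw [mul_assoc, my_int_mul_right hfint (A₁ * ∮ w in C(1, r), g w)]
    refine circleIntegral.integral_congr hR0.le fun z _ => ?_
    rw [← mul_assoc, my_int_mul_left hgint (f z * A₁)]
  -- step 2 : evaluate the inner integral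
  have h2 : ∀ z ∈ sphere (1:ℂ) R, (∮ w in C(1, r), f z * A₁ * g w)
      = (((if (0:ℤ) ≤ k then 2 * (π:ℝ) * I else 0) * (z - 1) ^ (-(j + k + 1) - 1)) • F z)
        - H z := by
    intro z hz
    obtain ⟨hzabs, hz1⟩ := my_sphere_mem (η := η) hR0 hRη hz
    have hz1' : z - 1 ≠ 0 := sub_ne_zero.2 hz1
    have hzout : z ∉ closedBall (1:ℂ) r := by
      simp only [mem_closedBall, not_le]
      rw [mem_sphere.mp hz]
      exact hrR
    have hznw : ∀ w ∈ sphere (1:ℂ) r, z - w ≠ 0 :=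
      fun w hw => sub_ne_zero.2 (hzw_ne z hz w hw)
    have hcong : EqOn (fun w => f z * A₁ * g w)
        (fun w => ψ z w • F z - ψ z w • F w) (sphere 1 r) := by
      intro w hw
      obtain ⟨hwabs, hw1⟩ := my_sphere_mem (η := η) hr0 hrη hw
      have hne : z ≠ w := hzw_ne z hz w hw
      show ((z - 1) ^ (-j - 1) • F z) * A₁ * ((w - 1) ^ (-k - 1) • F w) = _
      rw [smul_mul_assoc, smul_mul_assoc, mul_smul_comm, smul_smul]
      rw [show F z * A₁ * F w = (z - w)⁻¹ • (F z - F w) from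
        my_resolvent A₁ (hinv z hzabs hz1) (hinv w hwabs hw1) hne]
      rw [smul_smul, smul_sub, hψ]
      rw [mul_assoc]
    have hInt1 : CircleIntegrable (fun w => ψ z w • F z) 1 r := by
      apply ContinuousOn.circleIntegrable hr0.le
      refine ContinuousOn.fun_smul ?_ continuousOn_const
      intro w hw
      have hw1' : w - 1 ≠ 0 := sub_ne_zero.2 (my_sphere_mem (η := η) hr0 hrη hw).2
      exact (continuousAt_const.mul
        (((continuousAt_id.sub continuousAt_const).zpow₀ _ (Or.inl hw1')).mul
          ((continuousAt_const.sub continuousAt_id).inv₀ (hznw w hw)))).continuousWithinAt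
    have hInt2 : CircleIntegrable (fun w => ψ z w • F w) 1 r := by
      apply ContinuousOn.circleIntegrable hr0.le
      intro w hw
      obtain ⟨hwabs, hw1⟩ := my_sphere_mem (η := η) hr0 hrη hw
      have hw1' : w - 1 ≠ 0 := sub_ne_zero.2 hw1
      refine ContinuousAt.continuousWithinAt ?_
      refine ContinuousAt.smul (continuousAt_const.mul
        ((((continuousAt_id.sub continuousAt_const).zpow₀ _ (Or.inl hw1')).mul
          ((continuousAt_const.sub continuousAt_id).inv₀ (hznw w hw)))))
        ((my_Fdiff A₁ hinv hwabs hw1).continuousAt)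
    rw [circleIntegral.integral_congr hr0.le hcong,
      circleIntegral.integral_sub hInt1 hInt2]
    congr 1
    rw [circleIntegral.integral_smul_const]
    congr 1
    rw [hψ]
    rw [circleIntegral.integral_const_mul]
    rw [my_S_in (-k - 1) hr0 hzout]
    by_cases hk : 0 ≤ k
    · rw [if_neg (by omega : ¬ (0:ℤ) ≤ -k - 1), if_pos hk]
      have hzp : (z - 1) ^ (-j - 1) * (z - 1) ^ (-k - 1)
          = (z - 1) ^ (-(j + k + 1) - 1) := by
        rw [← zpow_add₀ hz1']
        congr 1
        ring
      calc (z - 1) ^ (-j - 1) * (2 * (π:ℝ) * I * (z - 1) ^ (-k - 1))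
          = 2 * (π:ℝ) * I * ((z - 1) ^ (-j - 1) * (z - 1) ^ (-k - 1)) := by ring
        _ = _ := by rw [hzp]
    · rw [if_pos (by omega : (0:ℤ) ≤ -k - 1), if_neg hk, mul_zero, zero_mul]
  -- step 3 : split and evaluate the two outer integrals
  have hu_int : CircleIntegrable (fun z =>
      ((if (0:ℤ) ≤ k then 2 * (π:ℝ) * I else 0) * (z - 1) ^ (-(j + k + 1) - 1)) • F z) 1 R :=
    my_ciF A₁ hinv _ _ hR0 hRη
  have h3 : (∮ z in C(1, R),
      ((((if (0:ℤ) ≤ k then 2 * (π:ℝ) * I else 0) * (z - 1) ^ (-(j + k + 1) - 1)) • F z) - H z))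
      = (if (0:ℤ) ≤ k then 2 * (π:ℝ) * I else 0) • J
        - (if 0 ≤ j then 0 else 2 * (π:ℝ) * I) • J := by
    rw [circleIntegral.integral_sub hu_int hHint]
    congr 1
    · -- first piece
      have : (∮ z in C(1, R),
          (((if (0:ℤ) ≤ k then 2 * (π:ℝ) * I else 0) * (z - 1) ^ (-(j + k + 1) - 1)) • F z))
          = ∮ z in C(1, R),
            (if (0:ℤ) ≤ k then 2 * (π:ℝ) * I else 0) • ((z - 1) ^ (-(j + k + 1) - 1) • F z) := by
        refine circleIntegral.integral_congr hR0.le fun z _ => ?_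
        rw [smul_smul]
      rw [this, circleIntegral.integral_smul, hJ,
        my_radius A₁ hinv (-(j + k + 1) - 1) hr0 hrR.le hRη]
    · -- second piece, via Fubini
      have hswap := my_circle_swap (fun z w => ψ z w • F w) 1 1 R r hcontprod
      rw [hH]
      rw [hswap]
      have hinner : ∀ w ∈ sphere (1:ℂ) r, (∮ z in C(1, R), ψ z w • F w)
          = ((if 0 ≤ j then 0 else 2 * (π:ℝ) * I) * (w - 1) ^ (-(j + k + 1) - 1)) • F w := by
        intro w hw
        obtain ⟨hwabs, hw1⟩ := my_sphere_mem (η := η) hr0 hrη hw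
        have hw1' : w - 1 ≠ 0 := sub_ne_zero.2 hw1
        have hwball : w ∈ ball (1:ℂ) R := by
          rw [mem_ball, mem_sphere.mp hw]
          exact hrR
        rw [circleIntegral.integral_smul_const]
        congr 1
        have : (∮ z in C(1, R), ψ z w)
            = ∮ z in C(1, R), (w - 1) ^ (-k - 1) * ((z - 1) ^ (-j - 1) * (z - w)⁻¹) :=
          circleIntegral.integral_congr hR0.le fun z _ => by rw [hψ]; ring
        rw [this, circleIntegral.integral_const_mul, my_S_out (-j - 1) hR0 hwball hw1]
        by_cases hj : 0 ≤ j
        · rw [if_neg (by omega : ¬ (0:ℤ) ≤ -j - 1), if_pos hj, mul_zero, zero_mul]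
        · rw [if_pos (by omega : (0:ℤ) ≤ -j - 1), if_neg hj]
          have hzp : (w - 1) ^ (-k - 1) * (w - 1) ^ (-j - 1)
              = (w - 1) ^ (-(j + k + 1) - 1) := by
            rw [← zpow_add₀ hw1']
            congr 1
            ring
          calc (w - 1) ^ (-k - 1) * (2 * (π:ℝ) * I * (w - 1) ^ (-j - 1))
              = 2 * (π:ℝ) * I * ((w - 1) ^ (-k - 1) * (w - 1) ^ (-j - 1)) := by ring
            _ = _ := by rw [hzp]
      rw [circleIntegral.integral_congr hr0.le hinner]
      have : (∮ w in C(1, r),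
          ((if 0 ≤ j then 0 else 2 * (π:ℝ) * I) * (w - 1) ^ (-(j + k + 1) - 1)) • F w)
          = ∮ w in C(1, r),
            (if 0 ≤ j then 0 else 2 * (π:ℝ) * I) • ((w - 1) ^ (-(j + k + 1) - 1) • F w) := by
        refine circleIntegral.integral_congr hr0.le fun w _ => ?_
        rw [smul_smul]
      rw [this, circleIntegral.integral_smul, hJ]
  -- assembly
  have core : (∮ z in C(1, R), f z) * A₁ * (∮ w in C(1, r), g w)
      = ((if (0:ℤ) ≤ k then 2 * (π:ℝ) * I else 0)
          - (if 0 ≤ j then 0 else 2 * (π:ℝ) * I)) • J := by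
    rw [h1, circleIntegral.integral_congr hR0.le h2, h3, sub_smul]
  have hNj : laurentN A₁ r j = K • ∮ z in C(1, R), f z := by
    rw [laurentN, ← my_radius A₁ hinv (-j - 1) hr0 hrR.le hRη]
  have hNk : laurentN A₁ r k = K • ∮ w in C(1, r), g w := by
    rw [laurentN]
  have hNm : laurentN A₁ r (j + k + 1) = K • J := by
    rw [laurentN, hJ]
  rw [hNj, hNk, hNm, smul_mul_assoc, smul_mul_assoc, mul_smul_comm, smul_smul, core,
    smul_smul, smul_smul]
  congr 1
  rw [hK]
  by_cases hj : 0 ≤ j <;> by_cases hk : 0 ≤ k <;>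
    simp only [if_pos, if_neg, hj, hk, if_true, if_false] <;>
    field_simp <;> ring

end Main

/-- under the unit-root assumption, `N_j A₁ N_k = (1 - η_j - η_k) N_{j+k+1}`
where `η_j = 1` if `j ≥ 0` and `η_j = 0` otherwise; consequently `N_{-1} A₁` is idempotent. -/
theorem statement2
    {B : Type*} [NormedAddCommGroup B] [NormedSpace ℂ B] [CompleteSpace B]
    (A₁ : B →L[ℂ] B) (η : ℝ) (hη : 0 < η)
    (hinv : ∀ z : ℂ, ‖z‖ < 1 + η → z ≠ 1 → IsUnit (1 - z • A₁))
    (hnot : ¬ IsUnit (1 - A₁))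
    (r : ℝ) (hr0 : 0 < r) (hrη : r < η) :
    (∀ j k : ℤ,
      laurentN A₁ r j * A₁ * laurentN A₁ r k
        = ((1 : ℂ) - (if 0 ≤ j then 1 else 0) - (if 0 ≤ k then 1 else 0)) •
            laurentN A₁ r (j + k + 1)) ∧
    (laurentN A₁ r (-1) * A₁) * (laurentN A₁ r (-1) * A₁) = laurentN A₁ r (-1) * A₁ := by
  have main : ∀ j k : ℤ,
      laurentN A₁ r j * A₁ * laurentN A₁ r k
        = ((1 : ℂ) - (if 0 ≤ j then 1 else 0) - (if 0 ≤ k then 1 else 0)) •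
            laurentN A₁ r (j + k + 1) := fun j k =>
    my_main A₁ hη hinv hr0 (by linarith : r < (r + η) / 2)
      (by linarith : (r + η) / 2 < η) j k
  refine ⟨main, ?_⟩
  have h1 : laurentN A₁ r (-1) * A₁ * laurentN A₁ r (-1) = laurentN A₁ r (-1) := by
    have h := main (-1) (-1)
    rw [if_neg (by norm_num : ¬ (0:ℤ) ≤ -1)] at h
    norm_num at h
    exact h
  rw [← mul_assoc, h1]
end

section
/- Under the unit-root assumption, P x = x for every x ∈ ker(I − A₁); in particular ker(I − A₁) ⊆ ran P. -/
/-- with `P := N_{-1} A₁`, under the unit-root assumption, `P x = x` for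
every `x ∈ ker (I - A₁)`; in particular `ker (I - A₁) ⊆ ran P`. -/
theorem statement8
    {B : Type*} [NormedAddCommGroup B] [NormedSpace ℂ B] [CompleteSpace B]
    (A₁ : B →L[ℂ] B) (η : ℝ) (hη : 0 < η)
    (hinv : ∀ z : ℂ, ‖z‖ < 1 + η → z ≠ 1 → IsUnit (1 - z • A₁))
    (hnot : ¬ IsUnit (1 - A₁))
    (r : ℝ) (hr0 : 0 < r) (hrη : r < η)
    (P : B →L[ℂ] B) (hP : P = laurentN A₁ r (-1) * A₁) :
    (∀ x : B, x ∈ LinearMap.ker ((1 - A₁ : B →L[ℂ] B) : B →ₗ[ℂ] B) → P x = x) ∧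
    LinearMap.ker ((1 - A₁ : B →L[ℂ] B) : B →ₗ[ℂ] B) ≤ LinearMap.range (P : B →ₗ[ℂ] B) := by
  have habs : ∀ θ : ℝ, ‖circleMap 1 r θ‖ < 1 + η := by
    intro θ
    have h1 : ‖circleMap 1 r θ - 1‖ = r := by
      simpa [abs_of_pos hr0] using norm_circleMap_zero r θ
    calc ‖circleMap 1 r θ‖ ≤ ‖circleMap 1 r θ - 1‖ + ‖(1 : ℂ)‖ := by
          have := norm_add_le (circleMap 1 r θ - 1) (1 : ℂ); rwa [sub_add_cancel] at this
      _ = r + 1 := by rw [h1, norm_one]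
      _ < 1 + η := by linarith
  have hne1 : ∀ θ : ℝ, circleMap 1 r θ ≠ 1 := fun θ => circleMap_ne_center hr0.ne'
  have hunit : ∀ θ : ℝ, IsUnit (1 - circleMap 1 r θ • A₁) := fun θ =>
    hinv _ (habs θ) (hne1 θ)
  have key : ∀ x : B, A₁ x = x → laurentN A₁ r (-1) x = x := by
    intro x hx
    have hval : ∀ θ : ℝ, Ring.inverse (1 - circleMap 1 r θ • A₁) x
        = (1 - circleMap 1 r θ)⁻¹ • x := by
      intro θ
      set z := circleMap 1 r θ with hz
      obtain ⟨u, hu⟩ := hunit θ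
      have hzne : (1 : ℂ) - z ≠ 0 := sub_ne_zero.mpr (hne1 θ).symm
      have h2 : ((1:ℂ) - z)⁻¹ * (1 - z) = 1 := inv_mul_cancel₀ hzne
      have happ : (1 - z • A₁) ((1 - z)⁻¹ • x) = x := by
        simp only [ContinuousLinearMap.sub_apply, ContinuousLinearMap.smul_apply,
          ContinuousLinearMap.one_apply, map_smul, hx, smul_smul]
        have h3 : x - z • x = ((1:ℂ) - z) • x := by rw [sub_smul, one_smul]
        rw [h3, smul_smul, h2, one_smul]
      calc Ring.inverse (1 - z • A₁) x
          = (↑u⁻¹ : B →L[ℂ] B) ((1 - z • A₁) ((1 - z)⁻¹ • x)) := by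
            rw [happ, ← hu, Ring.inverse_unit]
        _ = (1 - z)⁻¹ • x := by
            rw [← hu, ← ContinuousLinearMap.mul_apply, ← Units.val_mul, inv_mul_cancel,
              Units.val_one, ContinuousLinearMap.one_apply]
    have hGcont : Continuous fun θ : ℝ => Ring.inverse (1 - circleMap 1 r θ • A₁) := by
      have hg : Continuous fun θ : ℝ => (1 : B →L[ℂ] B) - circleMap 1 r θ • A₁ :=
        continuous_const.sub ((continuous_circleMap 1 r).smul continuous_const)
      rw [continuous_iff_continuousAt]
      intro θ
      obtain ⟨u, hu⟩ := hunit θ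
      have h := NormedRing.inverse_continuousAt u
      rw [hu] at h
      exact ContinuousAt.comp (f := fun θ : ℝ => (1 : B →L[ℂ] B) - circleMap 1 r θ • A₁) h hg.continuousAt
    have hint : IntervalIntegrable
        (fun θ : ℝ => deriv (circleMap 1 r) θ • Ring.inverse (1 - circleMap 1 r θ • A₁))
        MeasureTheory.volume 0 (2 * Real.pi) := by
      apply Continuous.intervalIntegrable
      simp only [deriv_circleMap]
      exact ((continuous_circleMap 0 r).mul continuous_const).smul hGcont
    have hF : (fun z : ℂ => (z - 1) ^ (-(-1 : ℤ) - 1) • Ring.inverse (1 - z • A₁))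
        = fun z : ℂ => Ring.inverse (1 - z • A₁) := by
      funext z; norm_num
    have happly : (circleIntegral (fun z => Ring.inverse (1 - z • A₁)) 1 r) x
        = (∮ z in C(1, r), ((1:ℂ) - z)⁻¹) • x := by
      rw [circleIntegral, ContinuousLinearMap.intervalIntegral_apply hint]
      simp only [ContinuousLinearMap.smul_apply, hval, smul_smul]
      rw [← circleIntegral.integral_smul_const (fun z => ((1:ℂ) - z)⁻¹) x 1 r,
        circleIntegral]
      simp only [smul_smul]
    have hscal : (∮ z in C(1, r), ((1:ℂ) - z)⁻¹) = -(2 * Real.pi * Complex.I) := by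
      have h1 : (∮ z in C(1, r), ((1:ℂ) - z)⁻¹)
          = ∮ z in C(1, r), (-1 : ℂ) * (z - 1)⁻¹ := by
        congr 1
        funext z
        rw [show (1 : ℂ) - z = -(z - 1) by ring, inv_neg, neg_one_mul]
      rw [h1, circleIntegral.integral_const_mul,
        circleIntegral.integral_sub_center_inv 1 hr0.ne']
      ring
    have h2pi : (2 * (Real.pi : ℂ) * Complex.I) ≠ 0 := by
      simp [Real.pi_ne_zero, Complex.I_ne_zero, Complex.ofReal_ne_zero]
    have hl : laurentN A₁ r (-1) x
        = (-(2 * (Real.pi : ℂ) * Complex.I)⁻¹) • ((∮ z in C(1, r), ((1:ℂ) - z)⁻¹) • x) := by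
      rw [laurentN, ContinuousLinearMap.smul_apply, hF, happly]
    rw [hl, hscal, smul_smul,
      show (-(2 * (Real.pi : ℂ) * Complex.I)⁻¹) * -(2 * Real.pi * Complex.I) = 1 by
        field_simp, one_smul]
  have main : ∀ x : B, x ∈ LinearMap.ker ((1 - A₁ : B →L[ℂ] B) : B →ₗ[ℂ] B) → P x = x := by
    intro x hx
    have h0 : x - A₁ x = 0 := by
      simpa [ContinuousLinearMap.sub_apply] using LinearMap.mem_ker.mp hx
    have hx' : A₁ x = x := (sub_eq_zero.mp h0).symm
    rw [hP, ContinuousLinearMap.mul_apply, hx', key x hx']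
  exact ⟨main, fun x hx => ⟨x, main x hx⟩⟩
end

section
/- Under the unit-root assumption, the following are equivalent: (i) N_{−k} = 0 for every k ≥ 2 (i.e. (I − zA₁)^{−1} has a simple pole at z = 1); (ii) ran P = ker(I − A₁); (iii) P is a bounded idempotent operator with range equal to ker(I − A₁) and kernel equal to ran(I − A₁); (iv) B = ran(I − A₁) ⊕ ker(I − A₁) (internal direct sum; in particular ran(I − A₁) is closed). Moreover, under any of these equivalent conditions, N_{−1} = P. -/
open Complex Metric Set

section Helpers

variable {E F : Type*} [NormedAddCommGroup E] [NormedSpace ℂ E]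
  [NormedAddCommGroup F] [NormedSpace ℂ F]

lemma clm_circleIntegral_comp [CompleteSpace E] [CompleteSpace F] (L : E →L[ℂ] F) {f : ℂ → E} {c : ℂ} {s : ℝ}
    (hf : CircleIntegrable f c s) :
    L (∮ z in C(c, s), f z) = ∮ z in C(c, s), L (f z) := by
  simp only [circleIntegral]
  rw [← ContinuousLinearMap.intervalIntegral_comp_comm L ((circleIntegrable_iff s).mp hf)]
  simp_rw [map_smul]

lemma circleIntegral_add' {f g : ℂ → E} {c : ℂ} {s : ℝ} (hf : CircleIntegrable f c s)
    (hg : CircleIntegrable g c s) :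
    (∮ z in C(c, s), (f z + g z)) = (∮ z in C(c, s), f z) + ∮ z in C(c, s), g z := by
  simp only [circleIntegral, smul_add]
  exact intervalIntegral.integral_add ((circleIntegrable_iff s).mp hf)
    ((circleIntegrable_iff s).mp hg)

lemma comm_ring_inverse {A : Type*} [MonoidWithZero A] {a b : A} (hu : IsUnit b)
    (h : Commute a b) : Commute a (Ring.inverse b) := by
  obtain ⟨u, rfl⟩ := hu
  rw [Ring.inverse_unit]
  exact h.units_inv_right

end Helpers

section S9

variable {B : Type*} [NormedAddCommGroup B] [NormedSpace ℂ B] [CompleteSpace B]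
variable (A₁ : B →L[ℂ] B) {η : ℝ}

lemma good_of_sphere {s : ℝ} (h0 : 0 < s) (hs : s < η) {z : ℂ}
    (hz : z ∈ sphere (1 : ℂ) s) : ‖z‖ < 1 + η ∧ z ≠ 1 := by
  rw [mem_sphere_iff_norm] at hz
  constructor
  · have h1 : ‖z‖ = ‖(1 : ℂ) + (z - 1)‖ := by norm_num
    have h2 : ‖(1 : ℂ) + (z - 1)‖ ≤ ‖(1 : ℂ)‖ + ‖z - 1‖ := norm_add_le _ _
    rw [hz] at h2
    simp only [norm_one] at h2
    calc ‖z‖ ≤ 1 + s := by rw [h1]; exact h2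
      _ < 1 + η := by linarith
  · intro h
    rw [h] at hz
    simp at hz
    linarith

lemma good_of_closedBall {s : ℝ} (hs : s < η) {z : ℂ}
    (hz : z ∈ closedBall (1 : ℂ) s) : ‖z‖ < 1 + η := by
  rw [mem_closedBall, Complex.dist_eq] at hz
  have h1 : ‖z‖ = ‖(1 : ℂ) + (z - 1)‖ := by norm_num
  have h2 : ‖(1 : ℂ) + (z - 1)‖ ≤ ‖(1 : ℂ)‖ + ‖z - 1‖ := norm_add_le _ _
  simp only [norm_one] at h2
  calc ‖z‖ ≤ 1 + ‖z - 1‖ := by rw [h1]; exact h2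
    _ ≤ 1 + s := by linarith
    _ < 1 + η := by linarith

variable (hinv : ∀ z : ℂ, ‖z‖ < 1 + η → z ≠ 1 → IsUnit (1 - z • A₁))

include hinv in
lemma diff_integrand (n : ℤ) (C D : B →L[ℂ] B) {z : ℂ}
    (hz1 : ‖z‖ < 1 + η) (hz : z ≠ 1) :
    DifferentiableAt ℂ (fun z : ℂ => (z - 1) ^ n • (C * Ring.inverse (1 - z • A₁) * D)) z := by
  have h1 : DifferentiableAt ℂ (fun z : ℂ => (z - 1) ^ n) z :=
    (differentiableAt_zpow.mpr (Or.inl (sub_ne_zero.mpr hz))).comp z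
      (differentiableAt_id.sub_const 1)
  have h2 : DifferentiableAt ℂ (fun z : ℂ => Ring.inverse (1 - z • A₁) : ℂ → B →L[ℂ] B) z :=
    DifferentiableAt.inverse
      ((differentiableAt_const _).sub (differentiableAt_id.smul_const A₁)) (hinv z hz1 hz)
  exact h1.smul (((differentiableAt_const C).mul h2).mul (differentiableAt_const D))

include hinv in
lemma circleInt (n : ℤ) (C D : B →L[ℂ] B) {s : ℝ} (h0 : 0 < s) (hs : s < η) :
    CircleIntegrable (fun z : ℂ => (z - 1) ^ n • (C * Ring.inverse (1 - z • A₁) * D)) 1 s := by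
  refine ContinuousOn.circleIntegrable h0.le (fun z hz => ?_)
  obtain ⟨h1, h2⟩ := good_of_sphere h0 hs hz
  exact (diff_integrand A₁ hinv n C D h1 h2).continuousAt.continuousWithinAt

include hinv in
lemma circleInt_base (n : ℤ) {s : ℝ} (h0 : 0 < s) (hs : s < η) :
    CircleIntegrable (fun z : ℂ => (z - 1) ^ n • Ring.inverse (1 - z • A₁)) 1 s := by
  have := circleInt A₁ hinv n 1 1 h0 hs
  simpa using this

include hinv in
lemma laurentN_radius (j : ℤ) {s₁ s₂ : ℝ} (h0 : 0 < s₁) (h12 : s₁ ≤ s₂) (h2 : s₂ < η) :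
    laurentN A₁ s₂ j = laurentN A₁ s₁ j := by
  rw [laurentN, laurentN]
  congr 1
  refine circleIntegral_eq_of_differentiable_on_annulus_off_countable h0 h12 countable_empty
    ?_ ?_
  · intro z hz
    have hz1 : ‖z‖ < 1 + η := good_of_closedBall h2 hz.1
    have hz2 : z ≠ 1 := by
      intro h
      subst h
      exact hz.2 (mem_ball_self h0)
    have := diff_integrand A₁ hinv (-j - 1) 1 1 hz1 hz2
    simp only [one_mul, mul_one] at this
    exact this.continuousAt.continuousWithinAt
  · intro z hz
    have hz1 : ‖z‖ < 1 + η := good_of_closedBall h2 (ball_subset_closedBall hz.1.1)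
    have hz2 : z ≠ 1 := by
      intro h
      subst h
      exact hz.1.2 (mem_closedBall_self h0.le)
    have := diff_integrand A₁ hinv (-j - 1) 1 1 hz1 hz2
    simpa using this

include hinv in
lemma mulL_laurent (C : B →L[ℂ] B) (n : ℤ) {s : ℝ} (h0 : 0 < s) (hs : s < η) :
    C * (∮ z in C(1, s), (z - 1) ^ n • Ring.inverse (1 - z • A₁))
      = ∮ z in C(1, s), (z - 1) ^ n • (C * Ring.inverse (1 - z • A₁)) := by
  have := clm_circleIntegral_comp (ContinuousLinearMap.mul ℂ (B →L[ℂ] B) C)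
    (circleInt_base A₁ hinv n h0 hs)
  simpa [map_smul] using this

include hinv in
lemma mulR_laurent (D : B →L[ℂ] B) (n : ℤ) {s : ℝ} (h0 : 0 < s) (hs : s < η) :
    (∮ z in C(1, s), (z - 1) ^ n • Ring.inverse (1 - z • A₁)) * D
      = ∮ z in C(1, s), (z - 1) ^ n • (Ring.inverse (1 - z • A₁) * D) := by
  have := clm_circleIntegral_comp ((ContinuousLinearMap.mul ℂ (B →L[ℂ] B)).flip D)
    (circleInt_base A₁ hinv n h0 hs)
  simpa [map_smul] using this


include hinv in
lemma laurentN_rel {s : ℝ} (h0 : 0 < s) (hs : s < η) (j : ℤ) :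
    (1 - A₁) * laurentN A₁ s j - A₁ * laurentN A₁ s (j - 1)
      = -(if j = 0 then (1 : B →L[ℂ] B) else 0) := by
  rw [laurentN, laurentN, mul_smul_comm, mul_smul_comm, ← smul_sub,
    mulL_laurent A₁ hinv (1 - A₁) (-j - 1) h0 hs,
    mulL_laurent A₁ hinv A₁ (-(j - 1) - 1) h0 hs]
  have hi1 : CircleIntegrable
      (fun z : ℂ => (z - 1) ^ (-j - 1) • ((1 - A₁) * Ring.inverse (1 - z • A₁))) 1 s := by
    simpa using circleInt A₁ hinv (-j - 1) (1 - A₁) 1 h0 hs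
  have hi2 : CircleIntegrable
      (fun z : ℂ => (z - 1) ^ (-(j - 1) - 1) • (A₁ * Ring.inverse (1 - z • A₁))) 1 s := by
    simpa using circleInt A₁ hinv (-(j - 1) - 1) A₁ 1 h0 hs
  rw [← circleIntegral.integral_sub hi1 hi2]
  have heq : EqOn
      (fun z : ℂ => (z - 1) ^ (-j - 1) • ((1 - A₁) * Ring.inverse (1 - z • A₁))
        - (z - 1) ^ (-(j - 1) - 1) • (A₁ * Ring.inverse (1 - z • A₁)))
      (fun z : ℂ => (z - 1) ^ (-j - 1) • (1 : B →L[ℂ] B)) (sphere 1 s) := by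
    intro z hz
    obtain ⟨h1, h2⟩ := good_of_sphere h0 hs hz
    have hzs : z - 1 ≠ 0 := sub_ne_zero.mpr h2
    have e1 : (-(j - 1) - 1 : ℤ) = (-j - 1) + 1 := by ring
    simp only
    rw [e1, zpow_add_one₀ hzs, mul_smul, ← smul_sub]
    congr 1
    rw [← smul_mul_assoc, ← sub_mul]
    have e2 : (1 - A₁) - (z - 1) • A₁ = 1 - z • A₁ := by
      rw [sub_smul, one_smul]
      abel
    rw [e2]
    exact Ring.mul_inverse_cancel _ (hinv z h1 h2)
  rw [circleIntegral.integral_congr h0.le heq, circleIntegral.integral_smul_const]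
  by_cases hj : j = 0
  · subst hj
    have he : (-(0 : ℤ) - 1) = -1 := by norm_num
    rw [he]
    have : (∮ z in C((1 : ℂ), s), (z - 1) ^ (-1 : ℤ)) = 2 * Real.pi * Complex.I := by
      have := circleIntegral.integral_sub_center_inv (1 : ℂ) h0.ne'
      rw [← this]
      congr 1
      funext z
      rw [zpow_neg_one]
    rw [this, if_pos rfl, smul_smul]
    have h2pi : (2 * (Real.pi : ℂ) * Complex.I) ≠ 0 := Complex.two_pi_I_ne_zero
    rw [neg_mul, inv_mul_cancel₀ h2pi]
    simp
  · rw [circleIntegral.integral_sub_zpow_of_ne (by omega : (-j - 1 : ℤ) ≠ -1),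
      if_neg hj, zero_smul, smul_zero, neg_zero]

include hinv in
lemma laurentN_comm {s : ℝ} (h0 : 0 < s) (hs : s < η) (j : ℤ) :
    A₁ * laurentN A₁ s j = laurentN A₁ s j * A₁ := by
  rw [laurentN, mul_smul_comm, smul_mul_assoc,
    mulL_laurent A₁ hinv A₁ (-j - 1) h0 hs, mulR_laurent A₁ hinv A₁ (-j - 1) h0 hs]
  congr 1
  refine circleIntegral.integral_congr h0.le (fun z hz => ?_)
  obtain ⟨h1, h2⟩ := good_of_sphere h0 hs hz
  have hu := hinv z h1 h2
  show (z - 1) ^ (-j - 1) • (A₁ * Ring.inverse (1 - z • A₁))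
      = (z - 1) ^ (-j - 1) • (Ring.inverse (1 - z • A₁) * A₁)
  congr 1
  have hc : Commute A₁ (1 - z • A₁) :=
    (Commute.one_right A₁).sub_right ((Commute.refl A₁).smul_right z)
  exact (comm_ring_inverse hu hc).eq

include hinv in
lemma laurentN_fix {s : ℝ} (h0 : 0 < s) (hs : s < η) {x : B} (hx : A₁ x = x) :
    laurentN A₁ s (-1) x = x := by
  have hRx : ∀ z ∈ sphere (1 : ℂ) s,
      Ring.inverse (1 - z • A₁) x = (1 - z)⁻¹ • x := by
    intro z hz
    obtain ⟨h1, h2⟩ := good_of_sphere h0 hs hz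
    have hz1 : (1 : ℂ) - z ≠ 0 := sub_ne_zero.mpr (Ne.symm h2)
    have key : (1 - z • A₁) ((1 - z)⁻¹ • x) = x := by
      rw [ContinuousLinearMap.sub_apply, ContinuousLinearMap.one_apply,
        ContinuousLinearMap.smul_apply, map_smul, hx, smul_smul, ← sub_smul]
      have h3 : (1 - z)⁻¹ - z * (1 - z)⁻¹ = 1 := by field_simp
      rw [h3, one_smul]
    calc Ring.inverse (1 - z • A₁) x
        = Ring.inverse (1 - z • A₁) ((1 - z • A₁) ((1 - z)⁻¹ • x)) := by rw [key]
      _ = (Ring.inverse (1 - z • A₁) * (1 - z • A₁)) ((1 - z)⁻¹ • x) := rfl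
      _ = (1 - z)⁻¹ • x := by
          rw [Ring.inverse_mul_cancel _ (hinv z h1 h2), ContinuousLinearMap.one_apply]
  have hint : CircleIntegrable (fun z : ℂ => Ring.inverse (1 - z • A₁) : ℂ → B →L[ℂ] B) 1 s := by
    have := circleInt_base A₁ hinv 0 h0 hs
    simpa using this
  rw [laurentN, ContinuousLinearMap.smul_apply]
  have h0' : (fun z : ℂ => (z - 1) ^ (-(-1 : ℤ) - 1) • Ring.inverse (1 - z • A₁))
      = (fun z : ℂ => Ring.inverse (1 - z • A₁) : ℂ → B →L[ℂ] B) := by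
    funext z; norm_num
  rw [h0']
  have hev := clm_circleIntegral_comp (ContinuousLinearMap.apply ℂ B x) hint
  simp only [ContinuousLinearMap.apply_apply] at hev
  rw [hev]
  rw [circleIntegral.integral_congr h0.le (fun z hz => hRx z hz)]
  have h1' : (fun z : ℂ => (1 - z)⁻¹ • x) = fun z : ℂ => ((-1 : ℂ) * (z - 1)⁻¹) • x := by
    funext z
    congr 1
    rw [← neg_sub z 1, inv_neg, neg_one_mul]
  rw [h1', circleIntegral.integral_smul_const, circleIntegral.integral_const_mul,
    circleIntegral.integral_sub_center_inv 1 h0.ne']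
  rw [smul_smul]
  have : (-(2 * (Real.pi : ℂ) * Complex.I)⁻¹) * (-1 * (2 * Real.pi * Complex.I)) = 1 := by
    have h2pi : (2 * (Real.pi : ℂ) * Complex.I) ≠ 0 := Complex.two_pi_I_ne_zero
    field_simp
  rw [this, one_smul]

set_option maxHeartbeats 1000000 in
include hinv in
lemma simple_of_compl
    (hcompl : IsCompl (LinearMap.range ((1 - A₁ : B →L[ℂ] B) : B →ₗ[ℂ] B)) (LinearMap.ker ((1 - A₁ : B →L[ℂ] B) : B →ₗ[ℂ] B)))
    (hMc : IsClosed ((LinearMap.range ((1 - A₁ : B →L[ℂ] B) : B →ₗ[ℂ] B) : Submodule ℂ B) : Set B))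
    {r : ℝ} (hr0 : 0 < r) (hrη : r < η) :
    ∀ k : ℤ, 2 ≤ k → laurentN A₁ r (-k) = 0 := by
  classical
  set M := LinearMap.range ((1 - A₁ : B →L[ℂ] B) : B →ₗ[ℂ] B) with hM
  set K := LinearMap.ker ((1 - A₁ : B →L[ℂ] B) : B →ₗ[ℂ] B) with hKdef
  have hKc : IsClosed (K : Set B) := ContinuousLinearMap.isClosed_ker (1 - A₁)
  set pr := Submodule.linearProjOfClosedCompl K M hcompl.symm hKc hMc with hpr
  set Q : B →L[ℂ] B := K.subtypeL.comp pr with hQdef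
  have hprco : ⇑pr = K.linearProjOfIsCompl M hcompl.symm :=
    Submodule.coe_continuous_linearProjOfClosedCompl' hcompl.symm hKc hMc
  have hQmem : ∀ x, Q x ∈ K := fun x => (pr x).2
  have hQK : ∀ x ∈ K, Q x = x := by
    intro x hx
    have h1 : pr x = ⟨x, hx⟩ := by
      have := Submodule.linearProjOfIsCompl_apply_left hcompl.symm (⟨x, hx⟩ : K)
      rw [hprco]
      exact this
    show ((pr x : K) : B) = x
    rw [h1]
  have hQM : ∀ x ∈ M, Q x = 0 := by
    intro x hx
    have h1 : pr x = 0 := by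
      have := Submodule.linearProjOfIsCompl_apply_right' hcompl.symm hx
      rw [hprco]
      exact this
    show ((pr x : K) : B) = 0
    rw [h1]; rfl
  have hKzero : ∀ x ∈ K, (1 - A₁) x = 0 := fun x hx => hx
  have hK1 : ∀ x ∈ K, A₁ x = x := by
    intro x hx
    have h1 := hKzero x hx
    rw [ContinuousLinearMap.sub_apply, ContinuousLinearMap.one_apply, sub_eq_zero] at h1
    exact h1.symm
  have hAQ : ∀ x, A₁ (Q x) = Q x := fun x => hK1 _ (hQmem x)
  have hQA : ∀ x, Q (A₁ x) = Q x := by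
    intro x
    have h1 : A₁ x - x ∈ M := by
      refine ⟨-x, ?_⟩
      rw [ContinuousLinearMap.coe_coe, ContinuousLinearMap.sub_apply, ContinuousLinearMap.one_apply, map_neg]
      abel
    have h2 : Q (A₁ x - x) = 0 := hQM _ h1
    rw [map_sub, sub_eq_zero] at h2
    exact h2
  have hQQ : ∀ x, Q (Q x) = Q x := fun x => hQK _ (hQmem x)
  have hAQ' : A₁ * Q = Q := ContinuousLinearMap.ext fun x => hAQ x
  have hQA' : Q * A₁ = Q := ContinuousLinearMap.ext fun x => hQA x
  have hQQ' : Q * Q = Q := ContinuousLinearMap.ext fun x => hQQ x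
  set T : B →L[ℂ] B := (1 - A₁) + Q with hT
  have hker : LinearMap.ker (T : B →ₗ[ℂ] B) = ⊥ := by
    rw [Submodule.eq_bot_iff]
    intro x hx
    rw [LinearMap.mem_ker] at hx
    have h1 : (1 - A₁) x + Q x = 0 := hx
    have h2 : (1 - A₁) x = -Q x := eq_neg_of_add_eq_zero_left h1
    have h3 : (1 - A₁) x ∈ M := ⟨x, rfl⟩
    have h4 : (1 - A₁) x ∈ K := by rw [h2]; exact K.neg_mem (hQmem x)
    have h5 : (1 - A₁) x = 0 := by
      have := hcompl.disjoint
      rw [Submodule.disjoint_def] at this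
      exact this _ h3 h4
    have h6 : Q x = 0 := by
      have := h2; rw [h5] at this; simpa using this.symm
    have h7 : x ∈ K := by rwa [hKdef, LinearMap.mem_ker]
    rw [← hQK x h7, h6]
  have hrange : LinearMap.range (T : B →ₗ[ℂ] B) = ⊤ := by
    rw [LinearMap.range_eq_top]
    intro y
    have hy : y ∈ M ⊔ K := by rw [hcompl.sup_eq_top]; trivial
    obtain ⟨m, hm, k, hk, rfl⟩ := Submodule.mem_sup.mp hy
    obtain ⟨u, hu⟩ := hm
    rw [ContinuousLinearMap.coe_coe] at hu
    refine ⟨(u - Q u) + k, ?_⟩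
    have e1 : T ((u - Q u) + k)
        = ((1 - A₁) u - (1 - A₁) (Q u) + (1 - A₁) k) + (Q u - Q (Q u) + Q k) := by
      show (1 - A₁) ((u - Q u) + k) + Q ((u - Q u) + k) = _
      rw [map_add, map_sub, map_add, map_sub]
    rw [ContinuousLinearMap.coe_coe, e1, hKzero _ (hQmem u), hKzero _ hk, hQQ, hQK _ hk, hu]
    abel
  set e := ContinuousLinearEquiv.ofBijective T hker hrange with he
  have hco : ∀ w, e w = T w := fun w => by
    rw [he, ContinuousLinearEquiv.coeFn_ofBijective]
  have hTe : ∀ y, T ((e.symm : B →L[ℂ] B) y) = y := by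
    intro y
    have : T (e.symm y) = e (e.symm y) := (hco _).symm
    rw [ContinuousLinearEquiv.coe_coe]
    rw [this, e.apply_symm_apply]
  have hTe2 : ∀ y, (e.symm : B →L[ℂ] B) (T y) = y := by
    intro y
    rw [ContinuousLinearEquiv.coe_coe, ← hco, e.symm_apply_apply]
  have hTunit : IsUnit T := by
    refine ⟨⟨T, (e.symm : B →L[ℂ] B), ?_, ?_⟩, rfl⟩
    · exact ContinuousLinearMap.ext fun y => hTe y
    · exact ContinuousLinearMap.ext fun y => hTe2 y
  obtain ⟨δ, hδ0, hδ⟩ := Metric.isOpen_iff.mp Units.isOpen T hTunit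
  set s := min r (δ / (2 * (‖A₁‖ + 1))) with hsdef
  have hs0 : 0 < s := lt_min hr0 (by positivity)
  have hsr : s ≤ r := min_le_left _ _
  have hsη : s < η := lt_of_le_of_lt hsr hrη
  have hTz : ∀ z : ℂ, ‖z - 1‖ ≤ s → IsUnit ((1 - z • A₁) + Q) := by
    intro z hz
    apply hδ
    rw [mem_ball_iff_norm]
    have e2 : ((1 - z • A₁) + Q) - T = (1 - z) • A₁ := by
      rw [hT, sub_smul, one_smul]
      abel
    rw [e2]
    show ‖(1 - z) • A₁‖ < δ
    have hns : ‖(1 - z) • A₁‖ ≤ ‖(1 : ℂ) - z‖ * ‖A₁‖ := norm_smul_le ((1:ℂ) - z) A₁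
    refine lt_of_le_of_lt hns ?_
    have h1 : ‖(1 : ℂ) - z‖ ≤ s := by
      rw [← norm_neg, neg_sub]
      exact hz
    have h2 : s ≤ δ / (2 * (‖A₁‖ + 1)) := min_le_right _ _
    have h3 : (0 : ℝ) ≤ ‖A₁‖ := norm_nonneg _
    have h4 : ‖(1 : ℂ) - z‖ * ‖A₁‖ ≤ (δ / (2 * (‖A₁‖ + 1))) * ‖A₁‖ := by
      apply mul_le_mul_of_nonneg_right (le_trans h1 h2) h3
    calc ‖(1 : ℂ) - z‖ * ‖A₁‖ ≤ (δ / (2 * (‖A₁‖ + 1))) * ‖A₁‖ := h4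
      _ < δ := by
          rw [div_mul_eq_mul_div, div_lt_iff₀ (by positivity)]
          nlinarith
  have hformula : ∀ z : ℂ, ‖z‖ < 1 + η → z ≠ 1 → IsUnit ((1 - z • A₁) + Q) →
      Ring.inverse (1 - z • A₁)
        = (1 - z)⁻¹ • Q + Ring.inverse ((1 - z • A₁) + Q) * (1 - Q) := by
    intro z h1 h2 hu
    set W := Ring.inverse ((1 - z • A₁) + Q) with hW
    have hz1 : (1 : ℂ) - z ≠ 0 := sub_ne_zero.mpr (Ne.symm h2)
    have hQTz : Commute Q ((1 - z • A₁) + Q) := by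
      have : Commute Q (1 - z • A₁) := by
        refine (Commute.one_right Q).sub_right ?_
        refine Commute.smul_right ?_ z
        show Q * A₁ = A₁ * Q
        rw [hQA', hAQ']
      exact this.add_right (Commute.refl Q)
    have hQW : Commute Q W := comm_ring_inverse hu hQTz
    have huz := hinv z h1 h2
    have key : (1 - z • A₁) * ((1 - z)⁻¹ • Q + W * (1 - Q)) = 1 := by
      have eQ : (1 - z • A₁) * Q = (1 - z) • Q := by
        rw [sub_mul, one_mul, smul_mul_assoc, hAQ', sub_smul, one_smul]
      have e1 : (1 - z • A₁) * ((1 - z)⁻¹ • Q) = Q := by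
        rw [mul_smul_comm, eQ, smul_smul, inv_mul_cancel₀ hz1, one_smul]
      have e2 : (1 - z • A₁) * (W * (1 - Q)) = 1 - Q := by
        have h3 : (1 - z • A₁) = ((1 - z • A₁) + Q) - Q := by abel
        rw [h3, sub_mul, ← mul_assoc, Ring.mul_inverse_cancel _ hu, one_mul]
        have h4 : Q * (W * (1 - Q)) = W * (Q * (1 - Q)) := by
          rw [← mul_assoc, hQW.eq, mul_assoc]
        have h5 : Q * (1 - Q) = 0 := by rw [mul_sub, mul_one, hQQ', sub_self]
        rw [h4, h5, mul_zero, sub_zero]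
      rw [mul_add, e1, e2]
      abel
    calc Ring.inverse (1 - z • A₁)
        = Ring.inverse (1 - z • A₁) * ((1 - z • A₁) * ((1 - z)⁻¹ • Q + W * (1 - Q))) := by
          rw [key, mul_one]
      _ = (Ring.inverse (1 - z • A₁) * (1 - z • A₁)) * ((1 - z)⁻¹ • Q + W * (1 - Q)) := by
          rw [mul_assoc]
      _ = (1 - z)⁻¹ • Q + W * (1 - Q) := by
          rw [Ring.inverse_mul_cancel _ huz, one_mul]
  intro k hk
  have hrad := laurentN_radius A₁ hinv (-k) hs0 hsr hrη
  rw [hrad, laurentN]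
  have hexp : (-(-k) - 1 : ℤ) = k - 1 := by ring
  rw [hexp]
  set g : ℂ → B →L[ℂ] B :=
    fun z => (z - 1) ^ (k - 1 : ℤ) • (Ring.inverse ((1 - z • A₁) + Q) * (1 - Q)) with hg
  set a : ℂ → B →L[ℂ] B := fun z => ((-1 : ℂ) * (z - 1) ^ (k - 2 : ℤ)) • Q with ha
  have hgdiff : ∀ z ∈ closedBall (1 : ℂ) s, DifferentiableAt ℂ g z := by
    intro z hz
    have hmem : ‖z - 1‖ ≤ s := by
      rw [mem_closedBall, Complex.dist_eq] at hz; exact hz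
    have hTzu := hTz z hmem
    refine DifferentiableAt.fun_smul ?_ ?_
    · exact (differentiableAt_zpow (m := k - 1).mpr (Or.inr (by omega))).comp z
        (differentiableAt_id.sub_const 1)
    · refine DifferentiableAt.mul ?_ (differentiableAt_const _)
      exact DifferentiableAt.inverse
        (((differentiableAt_const _).sub (differentiableAt_id.smul_const A₁)).add
          (differentiableAt_const Q)) hTzu
  have hadiff : ∀ z : ℂ, DifferentiableAt ℂ a z := by
    intro z
    by_cases hz : z = 1
    · subst hz
      refine DifferentiableAt.smul_const ?_ Q
      refine DifferentiableAt.const_mul ?_ _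
      have : (k - 2 : ℤ) = ((k - 2).toNat : ℤ) := by omega
      rw [this]
      apply DifferentiableAt.congr_of_eventuallyEq (f := fun z : ℂ => (z - 1) ^ ((k - 2).toNat))
      · exact (differentiableAt_pow _).comp _ (differentiableAt_id.sub_const 1)
      · filter_upwards with w using (zpow_natCast _ _).symm
    · refine DifferentiableAt.smul_const ?_ Q
      refine DifferentiableAt.const_mul ?_ _
      exact (differentiableAt_zpow.mpr (Or.inl (sub_ne_zero.mpr hz))).comp z
        (differentiableAt_id.sub_const 1)
  have hsub : EqOn (fun z : ℂ => (z - 1) ^ (k - 1 : ℤ) • Ring.inverse (1 - z • A₁))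
      (fun z => a z + g z) (sphere 1 s) := by
    intro z hz
    obtain ⟨h1, h2⟩ := good_of_sphere hs0 hsη hz
    have hzsub : z - 1 ≠ 0 := sub_ne_zero.mpr h2
    have hTzu : IsUnit ((1 - z • A₁) + Q) := by
      apply hTz
      rw [mem_sphere_iff_norm] at hz
      rw [hz]
    show (z - 1) ^ (k - 1 : ℤ) • Ring.inverse (1 - z • A₁) = a z + g z
    rw [hformula z h1 h2 hTzu, smul_add]
    congr 1
    rw [smul_smul]
    congr 1
    have hneg : (1 - z)⁻¹ = -(z - 1)⁻¹ := by rw [← neg_sub z 1, inv_neg]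
    rw [hneg]
    rw [show (k - 1 : ℤ) = (k - 2) + 1 from by ring, zpow_add_one₀ hzsub]
    field_simp
  rw [circleIntegral.integral_congr hs0.le hsub]
  have hA : CircleIntegrable a 1 s :=
    ContinuousOn.circleIntegrable hs0.le
      (fun z _ => (hadiff z).continuousAt.continuousWithinAt)
  have hG : CircleIntegrable g 1 s :=
    ContinuousOn.circleIntegrable hs0.le
      (fun z hz => (hgdiff z (sphere_subset_closedBall hz)).continuousAt.continuousWithinAt)
  rw [circleIntegral_add' hA hG]
  have h₁ : (∮ z in C((1 : ℂ), s), a z) = 0 := by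
    rw [ha]
    rw [circleIntegral.integral_smul_const, circleIntegral.integral_const_mul,
      circleIntegral.integral_sub_zpow_of_ne (by omega : (k - 2 : ℤ) ≠ -1), mul_zero, zero_smul]
  have h₂ : (∮ z in C((1 : ℂ), s), g z) = 0 := by
    refine circleIntegral_eq_zero_of_differentiable_on_off_countable hs0.le countable_empty
      (fun z hz => (hgdiff z hz).continuousAt.continuousWithinAt) ?_
    intro z hz
    exact hgdiff z (ball_subset_closedBall hz.1)
  rw [h₁, h₂, add_zero, smul_zero]

end S9

/-- with `P := N_{-1} A₁`, under the unit-root assumption the following are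
equivalent: (i) `N_{-k} = 0` for all `k ≥ 2` (simple pole at `z = 1`); (ii)
`ran P = ker (I - A₁)`; (iii) `P` is an idempotent with range `ker (I - A₁)` and kernel
`ran (I - A₁)`; (iv) `B = ran (I - A₁) ⊕ ker (I - A₁)` (internal direct sum; in
particular `ran (I - A₁)` is closed). Moreover under these conditions `N_{-1} = P`. -/
theorem statement9
    {B : Type*} [NormedAddCommGroup B] [NormedSpace ℂ B] [CompleteSpace B]
    (A₁ : B →L[ℂ] B) (η : ℝ) (hη : 0 < η)
    (hinv : ∀ z : ℂ, ‖z‖ < 1 + η → z ≠ 1 → IsUnit (1 - z • A₁))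
    (hnot : ¬ IsUnit (1 - A₁))
    (r : ℝ) (hr0 : 0 < r) (hrη : r < η)
    (P : B →L[ℂ] B) (hP : P = laurentN A₁ r (-1) * A₁) :
    ((∀ k : ℤ, 2 ≤ k → laurentN A₁ r (-k) = 0) ↔
      LinearMap.range (P : B →ₗ[ℂ] B) = LinearMap.ker ((1 - A₁ : B →L[ℂ] B) : B →ₗ[ℂ] B)) ∧
    ((∀ k : ℤ, 2 ≤ k → laurentN A₁ r (-k) = 0) ↔
      (P * P = P ∧ LinearMap.range (P : B →ₗ[ℂ] B) = LinearMap.ker ((1 - A₁ : B →L[ℂ] B) : B →ₗ[ℂ] B) ∧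
        LinearMap.ker (P : B →ₗ[ℂ] B) = LinearMap.range ((1 - A₁ : B →L[ℂ] B) : B →ₗ[ℂ] B))) ∧
    ((∀ k : ℤ, 2 ≤ k → laurentN A₁ r (-k) = 0) ↔
      (IsCompl (LinearMap.range ((1 - A₁ : B →L[ℂ] B) : B →ₗ[ℂ] B)) (LinearMap.ker ((1 - A₁ : B →L[ℂ] B) : B →ₗ[ℂ] B)) ∧
        IsClosed ((LinearMap.range ((1 - A₁ : B →L[ℂ] B) : B →ₗ[ℂ] B) : Submodule ℂ B) : Set B))) ∧
    ((∀ k : ℤ, 2 ≤ k → laurentN A₁ r (-k) = 0) → laurentN A₁ r (-1) = P) := by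
  classical
  set N : ℤ → (B →L[ℂ] B) := laurentN A₁ r with hN
  -- basic relations
  have relm1 : (1 - A₁) * N (-1) = A₁ * N (-2) := by
    have h := laurentN_rel A₁ hinv hr0 hrη (-1)
    rw [if_neg (by norm_num : (-1 : ℤ) ≠ 0), neg_zero, sub_eq_zero] at h
    have e : ((-1 : ℤ) - 1) = -2 := by norm_num
    rw [e] at h
    exact h
  have rel0 : (1 - A₁) * N 0 - A₁ * N (-1) = -1 := by
    have h := laurentN_rel A₁ hinv hr0 hrη 0
    rw [if_pos rfl] at h
    have e : ((0 : ℤ) - 1) = -1 := by norm_num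
    rw [e] at h
    exact h
  have comm1 : A₁ * N (-1) = N (-1) * A₁ := laurentN_comm A₁ hinv hr0 hrη (-1)
  have hK1 : ∀ x ∈ LinearMap.ker ((1 - A₁ : B →L[ℂ] B) : B →ₗ[ℂ] B), A₁ x = x := by
    intro x hx
    have h1 : (1 - A₁) x = 0 := hx
    rw [ContinuousLinearMap.sub_apply, ContinuousLinearMap.one_apply, sub_eq_zero] at h1
    exact h1.symm
  have fixN : ∀ x ∈ LinearMap.ker ((1 - A₁ : B →L[ℂ] B) : B →ₗ[ℂ] B), N (-1) x = x := fun x hx =>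
    laurentN_fix A₁ hinv hr0 hrη (hK1 x hx)
  have fixP : ∀ x ∈ LinearMap.ker ((1 - A₁ : B →L[ℂ] B) : B →ₗ[ℂ] B), P x = x := by
    intro x hx
    rw [hP, ContinuousLinearMap.mul_apply, hK1 x hx]
    exact fixN x hx
  have hPcommA : P * (1 - A₁) = (1 - A₁) * P := by
    rw [hP]
    have hNA : N (-1) * (1 - A₁) = (1 - A₁) * N (-1) := by
      rw [mul_sub, sub_mul, mul_one, one_mul, comm1]
    calc N (-1) * A₁ * (1 - A₁) = N (-1) * (A₁ * (1 - A₁)) := by rw [mul_assoc]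
      _ = N (-1) * ((1 - A₁) * A₁) := by
          congr 1
          rw [mul_sub, sub_mul, mul_one, one_mul]
      _ = N (-1) * (1 - A₁) * A₁ := by rw [mul_assoc]
      _ = (1 - A₁) * N (-1) * A₁ := by rw [hNA]
      _ = (1 - A₁) * (N (-1) * A₁) := by rw [mul_assoc]
  -- (i) → moreover
  have impl_mo : (∀ k : ℤ, 2 ≤ k → N (-k) = 0) → N (-1) = P := by
    intro hi
    have h2 : N (-2) = 0 := hi 2 le_rfl
    have h3 : (1 - A₁) * N (-1) = 0 := by rw [relm1, h2, mul_zero]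
    have h4 : A₁ * N (-1) = N (-1) := by
      rw [sub_mul, one_mul, sub_eq_zero] at h3
      exact h3.symm
    rw [hP, ← comm1, h4]
  -- (i) → (ii)
  have impl_12 : (∀ k : ℤ, 2 ≤ k → N (-k) = 0) →
      LinearMap.range (P : B →ₗ[ℂ] B) = LinearMap.ker ((1 - A₁ : B →L[ℂ] B) : B →ₗ[ℂ] B) := by
    intro hi
    have hNP := impl_mo hi
    have h3 : (1 - A₁) * P = 0 := by rw [← hNP, relm1, hi 2 le_rfl, mul_zero]
    apply le_antisymm
    · rintro x ⟨y, rfl⟩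
      show P y ∈ LinearMap.ker ((1 - A₁ : B →L[ℂ] B) : B →ₗ[ℂ] B)
      rw [LinearMap.mem_ker]
      have : ((1 - A₁) * P) y = 0 := by rw [h3]; rfl
      rwa [ContinuousLinearMap.mul_apply] at this
    · intro x hx
      exact ⟨x, fixP x hx⟩
  -- (ii) → (iii)
  have impl_23 : LinearMap.range (P : B →ₗ[ℂ] B) = LinearMap.ker ((1 - A₁ : B →L[ℂ] B) : B →ₗ[ℂ] B) →
      (P * P = P ∧ LinearMap.range (P : B →ₗ[ℂ] B) = LinearMap.ker ((1 - A₁ : B →L[ℂ] B) : B →ₗ[ℂ] B) ∧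
        LinearMap.ker (P : B →ₗ[ℂ] B) = LinearMap.range ((1 - A₁ : B →L[ℂ] B) : B →ₗ[ℂ] B)) := by
    intro hii
    have hPP : P * P = P := by
      ext x
      rw [ContinuousLinearMap.mul_apply]
      exact fixP (P x) (hii ▸ LinearMap.mem_range_self (P : B →ₗ[ℂ] B) x)
    refine ⟨hPP, hii, le_antisymm ?_ ?_⟩
    · intro x hx
      have hx0 : P x = 0 := hx
      have h := ContinuousLinearMap.ext_iff.mp rel0 x
      rw [ContinuousLinearMap.sub_apply, ContinuousLinearMap.mul_apply,
        ContinuousLinearMap.mul_apply, ContinuousLinearMap.neg_apply,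
        ContinuousLinearMap.one_apply] at h
      have hA : A₁ (N (-1) x) = P x := by
        calc A₁ (N (-1) x) = (A₁ * N (-1)) x := rfl
          _ = (N (-1) * A₁) x := by rw [comm1]
          _ = P x := by rw [hP]
      rw [hA, hx0, sub_zero] at h
      exact ⟨-(N 0 x), by rw [map_neg, ContinuousLinearMap.coe_coe, h, neg_neg]⟩
    · rintro x ⟨y, rfl⟩
      show (1 - A₁) y ∈ LinearMap.ker (P : B →ₗ[ℂ] B)
      rw [LinearMap.mem_ker]
      have h1 : P ((1 - A₁) y) = (1 - A₁) (P y) := by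
        calc P ((1 - A₁) y) = (P * (1 - A₁)) y := rfl
          _ = ((1 - A₁) * P) y := by rw [hPcommA]
          _ = (1 - A₁) (P y) := rfl
      have h2 : P y ∈ LinearMap.ker ((1 - A₁ : B →L[ℂ] B) : B →ₗ[ℂ] B) :=
        hii ▸ LinearMap.mem_range_self (P : B →ₗ[ℂ] B) y
      rw [ContinuousLinearMap.coe_coe, h1]
      exact h2
  -- (iii) → (iv)
  have impl_34 : (P * P = P ∧ LinearMap.range (P : B →ₗ[ℂ] B) = LinearMap.ker ((1 - A₁ : B →L[ℂ] B) : B →ₗ[ℂ] B) ∧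
        LinearMap.ker (P : B →ₗ[ℂ] B) = LinearMap.range ((1 - A₁ : B →L[ℂ] B) : B →ₗ[ℂ] B)) →
      (IsCompl (LinearMap.range ((1 - A₁ : B →L[ℂ] B) : B →ₗ[ℂ] B)) (LinearMap.ker ((1 - A₁ : B →L[ℂ] B) : B →ₗ[ℂ] B)) ∧
        IsClosed ((LinearMap.range ((1 - A₁ : B →L[ℂ] B) : B →ₗ[ℂ] B) : Submodule ℂ B) : Set B)) := by
    rintro ⟨hPP, hr, hk⟩
    have hPPx : ∀ x, P (P x) = P x := by
      intro x
      calc P (P x) = (P * P) x := rfl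
        _ = P x := by rw [hPP]
    have hMc : IsClosed ((LinearMap.range ((1 - A₁ : B →L[ℂ] B) : B →ₗ[ℂ] B) : Submodule ℂ B) : Set B) := by
      rw [← hk]
      exact ContinuousLinearMap.isClosed_ker P
    refine ⟨⟨?_, ?_⟩, hMc⟩
    · rw [disjoint_iff, ← hk, ← hr, Submodule.eq_bot_iff]
      rintro x ⟨hx1, hx2⟩
      obtain ⟨y, rfl⟩ := hx2
      have h1 : P (P y) = 0 := hx1
      rw [hPPx] at h1
      exact h1
    · rw [codisjoint_iff, ← hk, ← hr, eq_top_iff]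
      intro x _
      refine Submodule.mem_sup.mpr ⟨x - P x, ?_, P x, ⟨x, rfl⟩, by abel⟩
      show x - P x ∈ LinearMap.ker (P : B →ₗ[ℂ] B)
      rw [LinearMap.mem_ker, map_sub, ContinuousLinearMap.coe_coe, hPPx, sub_self]
  -- (iv) → (i)
  have impl_41 : (IsCompl (LinearMap.range ((1 - A₁ : B →L[ℂ] B) : B →ₗ[ℂ] B)) (LinearMap.ker ((1 - A₁ : B →L[ℂ] B) : B →ₗ[ℂ] B)) ∧
        IsClosed ((LinearMap.range ((1 - A₁ : B →L[ℂ] B) : B →ₗ[ℂ] B) : Submodule ℂ B) : Set B)) →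
      ∀ k : ℤ, 2 ≤ k → N (-k) = 0 := by
    rintro ⟨h1, h2⟩
    exact simple_of_compl A₁ hinv h1 h2 hr0 hrη
  refine ⟨⟨impl_12, fun hii => impl_41 (impl_34 (impl_23 hii))⟩,
    ⟨fun hi => impl_23 (impl_12 hi), fun h => impl_41 (impl_34 h)⟩,
    ⟨fun hi => impl_34 (impl_23 (impl_12 hi)), impl_41⟩, impl_mo⟩
end

section
/- Assume the unit-root assumption and that B = ran(I − A₁) ⊕ ker(I − A₁) as an internal direct sum of closed subspaces (the I(1) condition). Then for every complex z with |z| < 1 + η and z ≠ 1, (I − zA₁)^{−1} = −(z − 1)^{−1}P + ∑_{j=0}^∞ A₁^j(I − P) z^j, where the series converges in operator norm; moreover there exist a constant C ≥ 0 and a ∈ (0,1) such that ‖A₁^j(I − P)‖ ≤ C a^j for every j ≥ 0. -/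
open scoped ENNReal NNReal
open Filter

lemma st10_inverse_eq {R : Type*} [Ring R] {a b : R} (h1 : a * b = 1) (h2 : b * a = 1) :
    Ring.inverse a = b := by
  have : a = ((⟨a, b, h1, h2⟩ : Rˣ) : R) := rfl
  rw [this, Ring.inverse_unit]; rfl

lemma st10_commute_inverse {R : Type*} [Ring R] {u b : R} (hu : IsUnit u) (h : Commute b u) :
    Commute b (Ring.inverse u) := by
  obtain ⟨v, rfl⟩ := hu
  rw [Ring.inverse_unit]
  exact h.units_inv_right

lemma st10_unit_aux {R : Type*} [Ring R] {u q : R} (hq : q * q = q) (hc : Commute q u)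
    (hu : IsUnit u) :
    (u * (1 - q) + q) * (Ring.inverse u * (1 - q) + q) = 1 ∧
      (Ring.inverse u * (1 - q) + q) * (u * (1 - q) + q) = 1 := by
  set s := Ring.inverse u with hs
  have hus : u * s = 1 := Ring.mul_inverse_cancel u hu
  have hsu : s * u = 1 := Ring.inverse_mul_cancel u hu
  have hcs : Commute q s := st10_commute_inverse hu hc
  have h1q : (1 - q) * q = 0 := by rw [sub_mul, one_mul, hq, sub_self]
  have hq1 : q * (1 - q) = 0 := by rw [mul_sub, mul_one, hq, sub_self]
  have h1q1 : (1 - q) * (1 - q) = 1 - q := by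
    rw [sub_mul, one_mul, mul_sub, mul_one, hq]; abel
  constructor
  · have e1 : u * (1 - q) * (s * (1 - q)) = 1 - q := by
      rw [mul_assoc u, ← mul_assoc (1-q) s, ((Commute.one_left s).sub_left hcs).eq,
        ← mul_assoc, ← mul_assoc, hus, one_mul, h1q1]
    have e2 : u * (1 - q) * q = 0 := by rw [mul_assoc, h1q, mul_zero]
    have e3 : q * (s * (1 - q)) = 0 := by
      rw [← mul_assoc, hcs.eq, mul_assoc, hq1, mul_zero]
    calc (u * (1 - q) + q) * (s * (1 - q) + q)
        = u * (1-q) * (s * (1-q)) + u*(1-q)*q + (q * (s*(1-q)) + q*q) := by noncomm_ring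
      _ = 1 := by rw [e1, e2, e3, hq]; abel
  · have e1 : s * (1 - q) * (u * (1 - q)) = 1 - q := by
      rw [mul_assoc s, ← mul_assoc (1-q) u, ((Commute.one_left u).sub_left hc).eq,
        ← mul_assoc, ← mul_assoc, hsu, one_mul, h1q1]
    have e2 : s * (1 - q) * q = 0 := by rw [mul_assoc, h1q, mul_zero]
    have e3 : q * (u * (1 - q)) = 0 := by
      rw [← mul_assoc, hc.eq, mul_assoc, hq1, mul_zero]
    calc (s * (1 - q) + q) * (u * (1 - q) + q)
        = s * (1-q) * (u * (1-q)) + s*(1-q)*q + (q * (u*(1-q)) + q*q) := by noncomm_ring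
      _ = 1 := by rw [e1, e2, e3, hq]; abel

lemma st10_geom {R : Type*} [NormedRing R] [CompleteSpace R] {x : R} {C b : ℝ}
    (hb0 : 0 ≤ b) (hb1 : b < 1) (hC : ∀ n : ℕ, ‖x ^ n‖ ≤ C * b ^ n) :
    HasSum (fun n : ℕ => x ^ n) (Ring.inverse (1 - x)) ∧ IsUnit (1 - x) := by
  have hsummable : Summable (fun n : ℕ => x ^ n) := by
    refine Summable.of_norm ?_
    exact Summable.of_nonneg_of_le (fun n => norm_nonneg _) hC
      ((summable_geometric_of_lt_one hb0 hb1).mul_left C)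
  set s := ∑' n : ℕ, x ^ n with hsdef
  have hs : HasSum (fun n : ℕ => x ^ n) s := hsummable.hasSum
  have hshift : HasSum (fun n : ℕ => x ^ (n + 1)) (s - 1) := by
    refine (hasSum_nat_add_iff 1).2 ?_
    simpa using hs
  have hL : x * s = s - 1 := by
    have := hs.mul_left x
    simp_rw [← pow_succ'] at this
    exact this.unique hshift
  have hR : s * x = s - 1 := by
    have := hs.mul_right x
    simp_rw [← pow_succ] at this
    exact this.unique hshift
  have h1 : (1 - x) * s = 1 := by rw [sub_mul, one_mul, hL, sub_sub_cancel]
  have h2 : s * (1 - x) = 1 := by rw [mul_sub, mul_one, hR, sub_sub_cancel]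
  rw [st10_inverse_eq h1 h2]
  exact ⟨hs, ⟨⟨1 - x, s, h1, h2⟩, rfl⟩⟩

lemma st10_decay {R : Type*} [NormedRing R] [NormedAlgebra ℂ R] [CompleteSpace R]
    [NormOneClass R] {M : R} {ρ b : ℝ}
    (hρ : spectralRadius ℂ M ≤ ENNReal.ofReal ρ) (hb0 : 0 < b) (hb : ρ < b) :
    ∃ C : ℝ, 1 ≤ C ∧ ∀ n : ℕ, ‖M ^ n‖ ≤ C * b ^ n := by
  have htend := spectrum.pow_nnnorm_pow_one_div_tendsto_nhds_spectralRadius M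
  have hlt : spectralRadius ℂ M < ENNReal.ofReal b :=
    hρ.trans_lt ((ENNReal.ofReal_lt_ofReal_iff hb0).2 hb)
  obtain ⟨N, hN⟩ := Filter.eventually_atTop.1 (htend.eventually_lt_const hlt)
  have key : ∀ n : ℕ, N ≤ n → n ≠ 0 → ‖M ^ n‖ ≤ b ^ n := by
    intro n hn hn0
    have h1 := (hN n hn).le
    have h2 : ((‖M ^ n‖₊ : ℝ≥0∞) ^ (1 / (n : ℝ))) ^ (n : ℝ) ≤
        (ENNReal.ofReal b) ^ (n : ℝ) := ENNReal.rpow_le_rpow h1 (Nat.cast_nonneg n)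
    rw [← ENNReal.rpow_mul, one_div, inv_mul_cancel₀ (Nat.cast_ne_zero.2 hn0),
      ENNReal.rpow_one, ENNReal.rpow_natCast, ← ENNReal.ofReal_pow hb0.le,
      ← enorm_eq_nnnorm, ← ofReal_norm] at h2
    exact (ENNReal.ofReal_le_ofReal_iff (by positivity)).1 h2
  set F := max N 1 with hF
  refine ⟨1 + ∑ k ∈ Finset.range F, ‖M ^ k‖ * b⁻¹ ^ k, ?_, ?_⟩
  · have : (0:ℝ) ≤ ∑ k ∈ Finset.range F, ‖M ^ k‖ * b⁻¹ ^ k :=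
      Finset.sum_nonneg fun k _ => by positivity
    linarith
  · intro n
    rcases lt_or_ge n F with h | h
    · have hmem : n ∈ Finset.range F := Finset.mem_range.2 h
      have hle : ‖M ^ n‖ * b⁻¹ ^ n ≤ ∑ k ∈ Finset.range F, ‖M ^ k‖ * b⁻¹ ^ k :=
        Finset.single_le_sum (f := fun k => ‖M ^ k‖ * b⁻¹ ^ k) (fun k _ => by positivity) hmem
      have hb' : (0:ℝ) < b ^ n := by positivity
      have : ‖M ^ n‖ = ‖M ^ n‖ * b⁻¹ ^ n * b ^ n := by
        rw [mul_assoc, ← mul_pow, inv_mul_cancel₀ hb0.ne', one_pow, mul_one]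
      rw [this]
      have hsum : (0:ℝ) ≤ ∑ k ∈ Finset.range F, ‖M ^ k‖ * b⁻¹ ^ k :=
        Finset.sum_nonneg fun k _ => by positivity
      nlinarith [hle, hb'.le, mul_le_mul_of_nonneg_right hle hb'.le]
    · have hn1 : n ≠ 0 := by
        intro h0; rw [h0] at h; exact absurd (le_trans (le_max_right N 1) h) (by norm_num)
      have := key n (le_trans (le_max_left N 1) h) hn1
      have hsum : (0:ℝ) ≤ ∑ k ∈ Finset.range F, ‖M ^ k‖ * b⁻¹ ^ k :=
        Finset.sum_nonneg fun k _ => by positivity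
      nlinarith [pow_nonneg hb0.le n]

lemma st10_circleIntegral_congr {E : Type*} [NormedAddCommGroup E] [NormedSpace ℂ E]
    {f g : ℂ → E} {c : ℂ} {r : ℝ} (hr : 0 ≤ r) (h : Set.EqOn f g (Metric.sphere c r)) :
    (∮ z in C(c, r), f z) = ∮ z in C(c, r), g z := by
  simp only [circleIntegral]
  refine intervalIntegral.integral_congr fun θ _ => ?_
  rw [h (circleMap_mem_sphere c hr θ)]

set_option maxHeartbeats 2000000


/-- with `P := N_{-1} A₁`, under the unit-root assumption and the I(1)
condition `B = ran (I - A₁) ⊕ ker (I - A₁)` (internal direct sum of closed subspaces),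
the coefficients `A₁^j (I - P)` decay geometrically and, for every `z` with
`|z| < 1 + η`, `z ≠ 1`, the series `∑_j z^j A₁^j (I - P)` converges in operator norm
with sum `(I - zA₁)⁻¹ + (z-1)⁻¹ P`, i.e.
`(I - zA₁)⁻¹ = -(z-1)⁻¹ P + ∑_{j=0}^∞ A₁^j (I - P) z^j`. -/
theorem statement10
    {B : Type*} [NormedAddCommGroup B] [NormedSpace ℂ B] [CompleteSpace B]
    (A₁ : B →L[ℂ] B) (η : ℝ) (hη : 0 < η)
    (hinv : ∀ z : ℂ, ‖z‖ < 1 + η → z ≠ 1 → IsUnit (1 - z • A₁))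
    (hnot : ¬ IsUnit (1 - A₁))
    (r : ℝ) (hr0 : 0 < r) (hrη : r < η)
    (P : B →L[ℂ] B) (hP : P = laurentN A₁ r (-1) * A₁)
    (hcompl : IsCompl (LinearMap.range (((1 - A₁ : B →L[ℂ] B) : B →ₗ[ℂ] B))) (LinearMap.ker (((1 - A₁ : B →L[ℂ] B) : B →ₗ[ℂ] B))))
    (hclosed : IsClosed ((LinearMap.range (((1 - A₁ : B →L[ℂ] B) : B →ₗ[ℂ] B)) : Submodule ℂ B) : Set B)) :
    (∃ C : ℝ, 0 ≤ C ∧ ∃ a : ℝ, a ∈ Set.Ioo (0 : ℝ) 1 ∧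
      ∀ j : ℕ, ‖A₁ ^ j * (1 - P)‖ ≤ C * a ^ j) ∧
    (∀ z : ℂ, ‖z‖ < 1 + η → z ≠ 1 →
      HasSum (fun j : ℕ => z ^ j • (A₁ ^ j * (1 - P)))
        (Ring.inverse (1 - z • A₁) + (z - 1)⁻¹ • P)) := by
  classical
  haveI hB : Nontrivial B := by
    by_contra h
    rw [not_nontrivial_iff_subsingleton] at h
    exact hnot (isUnit_of_subsingleton _)
  set K : Submodule ℂ B := LinearMap.ker (((1 - A₁ : B →L[ℂ] B) : B →ₗ[ℂ] B)) with hKdef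
  set R' : Submodule ℂ B := LinearMap.range (((1 - A₁ : B →L[ℂ] B) : B →ₗ[ℂ] B)) with hRdef
  have hKclosed : IsClosed (K : Set B) := ContinuousLinearMap.isClosed_ker (1 - A₁)
  haveI : CompleteSpace R' := hclosed.completeSpace_coe
  haveI : CompleteSpace K := hKclosed.completeSpace_coe
  set Q : B →L[ℂ] B :=
    K.subtypeL.comp (K.linearProjOfClosedCompl R' hcompl.symm hKclosed hclosed) with hQdef
  have hproj : ⇑(K.linearProjOfClosedCompl R' hcompl.symm hKclosed hclosed) =
      K.projectionOnto R' hcompl.symm :=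
    Submodule.coe_continuous_linearProjOfClosedCompl' _ _ _
  have hQx : ∀ x : B, Q x = ↑(K.projectionOnto R' hcompl.symm x) := by
    intro x
    rw [hQdef]
    simp only [ContinuousLinearMap.coe_comp', Function.comp_apply, Submodule.coe_subtypeL',
      Submodule.coe_subtype]
    rw [hproj]
  have hQmemK : ∀ x : B, Q x ∈ K := fun x => by
    rw [hQx]; exact (K.projectionOnto R' hcompl.symm x).2
  have hQK : ∀ x : B, x ∈ K → Q x = x := by
    intro x hx
    rw [hQx]
    exact congrArg Subtype.val (Submodule.projectionOnto_apply_left hcompl.symm ⟨x, hx⟩)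
  have hQR : ∀ x : B, x ∈ R' → Q x = 0 := by
    intro x hx
    rw [hQx, Submodule.projectionOnto_apply_of_mem_right hcompl.symm hx]
    rfl
  have hsubR : ∀ x : B, x - Q x ∈ R' := by
    intro x
    have hx : x ∈ R' ⊔ K := by rw [hcompl.sup_eq_top]; trivial
    obtain ⟨y, hy, k, hk, rfl⟩ := Submodule.mem_sup.1 hx
    have hQyk : Q (y + k) = k := by rw [map_add, hQR y hy, hQK k hk, zero_add]
    rw [hQyk]
    simpa using hy
  have hmemK_iff : ∀ x : B, x ∈ K ↔ A₁ x = x := by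
    intro x
    rw [hKdef, LinearMap.mem_ker]
    constructor
    · intro h
      have : x - A₁ x = 0 := by simpa using h
      have := sub_eq_zero.1 this
      exact this.symm
    · intro h
      simp [h]
  have hQQ : Q * Q = Q := by
    ext x
    simp only [ContinuousLinearMap.mul_apply]
    exact hQK _ (hQmemK x)
  have hAQ : A₁ * Q = Q := by
    ext x
    simp only [ContinuousLinearMap.mul_apply]
    exact (hmemK_iff _).1 (hQmemK x)
  have hQA : Q * A₁ = Q := by
    ext x
    simp only [ContinuousLinearMap.mul_apply]
    have hmem : A₁ x - x ∈ R' := ⟨-x, by simp; abel⟩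
    have : Q (A₁ x) = Q ((A₁ x - x) + x) := by congr 1; abel
    rw [this, map_add, hQR _ hmem, zero_add]
  set M : B →L[ℂ] B := A₁ * (1 - Q) with hMdef
  have hcommQA : Commute Q A₁ := by
    unfold Commute SemiconjBy
    rw [hQA, hAQ]
  have hcommAM : Commute A₁ M :=
    (Commute.refl A₁).mul_right ((Commute.one_right A₁).sub_right hcommQA.symm)
  have hidem : (1 - Q : B →L[ℂ] B) * (1 - Q) = 1 - Q := by
    rw [sub_mul, one_mul, mul_sub, mul_one, hQQ]; abel
  have hsplit : ∀ z : ℂ, 1 - z • M = (1 - z • A₁) * (1 - Q) + Q := by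
    intro z
    have h1 : (z • A₁) * (1 - Q) = z • M := by rw [smul_mul_assoc]
    rw [sub_mul, one_mul, h1]
    abel
  -- invertibility of `1 - M` from the I(1) condition
  have hu1 : IsUnit (1 - M) := by
    set f : R' →L[ℂ] R' :=
      ContinuousLinearMap.codRestrict ((1 - A₁).comp R'.subtypeL) R'
        (fun x => LinearMap.mem_range_self _ (x : B)) with hfdef
    have hf : ∀ x : R', (f x : B) = (1 - A₁) (x : B) := fun x => rfl
    have finj : LinearMap.ker (f : R' →ₗ[ℂ] R') = ⊥ := by
      rw [Submodule.eq_bot_iff]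
      intro x hx
      have h0 : (1 - A₁) (x : B) = 0 := by
        rw [← hf x]
        rw [LinearMap.mem_ker] at hx
        rw [show f x = 0 from hx]
        rfl
      have hxK : (x : B) ∈ K := by rw [hKdef, LinearMap.mem_ker]; exact h0
      have := Submodule.disjoint_def.1 hcompl.disjoint (x : B) x.2 hxK
      exact Subtype.ext this
    have fsurj : LinearMap.range (f : R' →ₗ[ℂ] R') = ⊤ := by
      rw [Submodule.eq_top_iff']
      intro y
      obtain ⟨x, hx⟩ := y.2
      refine ⟨⟨x - Q x, hsubR x⟩, ?_⟩
      apply Subtype.ext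
      rw [show (f : R' →ₗ[ℂ] R') ⟨x - Q x, hsubR x⟩ = f ⟨x - Q x, hsubR x⟩ from rfl, hf]
      have hQxK : Q x ∈ K := hQmemK x
      have : (1 - A₁) (Q x) = 0 := by rw [hKdef, LinearMap.mem_ker] at hQxK; exact hQxK
      calc (1 - A₁) (x - Q x) = (1 - A₁) x - (1 - A₁) (Q x) := map_sub _ _ _
        _ = (1 - A₁) x := by rw [this, sub_zero]
        _ = (y : B) := hx
    set e := ContinuousLinearEquiv.ofBijective f finj fsurj with hedef
    have he : ∀ x : R', e x = f x := fun x => by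
      rw [hedef]; rw [ContinuousLinearEquiv.coeFn_ofBijective]
    set πR : B →L[ℂ] R' := ContinuousLinearMap.codRestrict (1 - Q) R'
      (fun x => by simpa using hsubR x) with hπdef
    have hπ : ∀ x : B, (πR x : B) = x - Q x := fun x => rfl
    set G : B →L[ℂ] B := R'.subtypeL.comp ((e.symm : R' →L[ℂ] R').comp πR) + Q with hGdef
    have hGapp : ∀ w : B, G w = ↑(e.symm (πR w)) + Q w := fun w => rfl
    have h1M : ∀ x : B, (1 - M) x = x - A₁ (x - Q x) := by
      intro x
      simp [hMdef, ContinuousLinearMap.sub_apply, ContinuousLinearMap.mul_apply]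
    have hG1 : G * (1 - M) = 1 := by
      ext x
      simp only [ContinuousLinearMap.mul_apply, ContinuousLinearMap.one_apply]
      set y := x - Q x with hy
      have hyR : y ∈ R' := hsubR x
      have hQy : Q y = 0 := hQR y hyR
      have hQAy : Q (A₁ y) = 0 := by
        have : (Q * A₁) y = Q y := by rw [hQA]
        simp only [ContinuousLinearMap.mul_apply] at this
        rw [this, hQy]
      have hw : (1 - M) x = x - A₁ y := h1M x
      have hQw : Q ((1 - M) x) = Q x := by
        rw [hw, map_sub, hQAy, sub_zero]
      have hπw : πR ((1 - M) x) = f ⟨y, hyR⟩ := by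
        apply Subtype.ext
        rw [hπ, hQw, hw]
        show x - A₁ y - Q x = (1 - A₁) y
        rw [ContinuousLinearMap.sub_apply, ContinuousLinearMap.one_apply, hy]
        abel
      rw [hGapp, hπw, hQw]
      have : e.symm (f ⟨y, hyR⟩) = ⟨y, hyR⟩ := by
        rw [← he]; exact e.symm_apply_apply _
      rw [this]
      show y + Q x = x
      rw [hy]; abel
    have hG2 : (1 - M) * G = 1 := by
      ext x
      simp only [ContinuousLinearMap.mul_apply, ContinuousLinearMap.one_apply]
      set y' : B := ↑(e.symm (πR x)) with hy'
      have hy'R : y' ∈ R' := (e.symm (πR x)).2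
      have hk'K : Q x ∈ K := hQmemK x
      have hGx : G x = y' + Q x := hGapp x
      have hQGx : Q (G x) = Q x := by
        rw [hGx, map_add, hQR y' hy'R, hQK _ hk'K, zero_add]
      rw [h1M, hQGx, hGx]
      have hfy' : (1 - A₁) y' = (πR x : B) := by
        have h6 : f (e.symm (πR x)) = πR x := by rw [← he]; exact e.apply_symm_apply _
        rw [← hf, h6]
      have h1A : A₁ y' = y' - (πR x : B) := by
        have h7 := hfy'
        rw [ContinuousLinearMap.sub_apply, ContinuousLinearMap.one_apply] at h7
        rw [← h7]; abel
      have hπx : (πR x : B) = x - Q x := hπ x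
      rw [show y' + Q x - Q x = y' by abel, h1A, hπx]
      abel
    exact ⟨⟨1 - M, G, hG2, hG1⟩, rfl⟩
  -- invertibility of `1 - z M` for all |z| < 1 + η
  have huz : ∀ z : ℂ, ‖z‖ < 1 + η → IsUnit (1 - z • M) := by
    intro z hz
    rcases eq_or_ne z 1 with rfl | hz1
    · simpa using hu1
    · have hu := hinv z hz hz1
      have hcQu : Commute Q (1 - z • A₁) :=
        (Commute.one_right Q).sub_right (hcommQA.smul_right z)
      obtain ⟨h1, h2⟩ := st10_unit_aux hQQ hcQu hu
      rw [hsplit z]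
      exact ⟨⟨_, _, h1, h2⟩, rfl⟩
  have hρ : spectralRadius ℂ M ≤ ENNReal.ofReal (1 + η)⁻¹ := by
    rw [spectralRadius]
    refine iSup₂_le fun k hk => ?_
    rw [← enorm_eq_nnnorm, ← ofReal_norm]
    refine ENNReal.ofReal_le_ofReal ?_
    by_contra hgt
    push_neg at hgt
    have hinvpos : (0:ℝ) < (1 + η)⁻¹ := by positivity
    have hk0 : k ≠ 0 := by
      intro h0
      rw [h0, norm_zero] at hgt
      linarith
    have hkabs : ‖k⁻¹‖ < 1 + η := by
      rw [norm_inv]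
      have h1 : ‖k‖⁻¹ < ((1 + η)⁻¹)⁻¹ := by
        apply inv_strictAnti₀ hinvpos
        exact hgt
      rwa [inv_inv] at h1
    have hunit := huz k⁻¹ hkabs
    have halg : IsUnit (algebraMap ℂ (B →L[ℂ] B) k - M) := by
      have hkalg : algebraMap ℂ (B →L[ℂ] B) k - M = k • (1 - k⁻¹ • M) := by
        rw [smul_sub, smul_smul, mul_inv_cancel₀ hk0, one_smul,
          Algebra.algebraMap_eq_smul_one]
      rw [hkalg, show k • ((1:B →L[ℂ] B) - k⁻¹ • M)
          = (algebraMap ℂ (B →L[ℂ] B) k) * (1 - k⁻¹ • M) by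
        rw [Algebra.algebraMap_eq_smul_one, smul_mul_assoc, one_mul]]
      exact ((isUnit_iff_ne_zero.2 hk0).map (algebraMap ℂ (B →L[ℂ] B))).mul hunit
    exact spectrum.notMem_iff.2 halg hk
  have hgeomM : ∀ b : ℝ, (1 + η)⁻¹ < b → ∃ C : ℝ, 1 ≤ C ∧ ∀ n : ℕ, ‖M ^ n‖ ≤ C * b ^ n :=
    fun b hb => st10_decay hρ (lt_trans (by positivity) hb) hb
  have hpow : ∀ j : ℕ, M ^ j * (1 - Q) = A₁ ^ j * (1 - Q) := by
    intro j
    induction j with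
    | zero => simp
    | succ n ih =>
      have c : (1 - Q : B →L[ℂ] B) * A₁ ^ n = A₁ ^ n * (1 - Q) :=
        ((Commute.one_left (A₁ ^ n)).sub_left (hcommQA.pow_right n)).eq
      rw [pow_succ', mul_assoc, ih]
      calc M * (A₁ ^ n * (1 - Q))
          = A₁ * ((1 - Q) * A₁ ^ n * (1 - Q)) := by rw [hMdef]; simp only [mul_assoc]
        _ = A₁ * (A₁ ^ n * ((1 - Q) * (1 - Q))) := by rw [c]; simp only [mul_assoc]
        _ = A₁ ^ (n + 1) * (1 - Q) := by rw [hidem, pow_succ']; simp only [mul_assoc]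
  have hgeo2 : ∀ z : ℂ, ‖z‖ < 1 + η →
      HasSum (fun j : ℕ => (z • M) ^ j) (Ring.inverse (1 - z • M)) := by
    intro z hz
    set t : ℝ := max ‖z‖ 1 with ht
    have ht1 : (1:ℝ) ≤ t := le_max_right _ _
    have ht0 : (0:ℝ) < t := by linarith
    have htη : t < 1 + η := max_lt hz (by linarith)
    set b : ℝ := ((1 + η)⁻¹ + t⁻¹) / 2 with hb
    have htinv : (1 + η)⁻¹ < t⁻¹ := inv_strictAnti₀ ht0 htη
    have hb1 : (1 + η)⁻¹ < b := by rw [hb]; linarith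
    have hb2 : b < t⁻¹ := by rw [hb]; linarith
    have hb0 : (0:ℝ) < b := lt_trans (by positivity) hb1
    obtain ⟨C, hC1, hC⟩ := hgeomM b hb1
    have htb : t * b < 1 := by
      have := mul_lt_mul_of_pos_left hb2 ht0
      rwa [mul_inv_cancel₀ ht0.ne'] at this
    have hbound : ∀ n : ℕ, ‖(z • M) ^ n‖ ≤ C * (t * b) ^ n := by
      intro n
      rw [smul_pow, norm_smul (z ^ n) (M ^ n), norm_pow]
      have h1 : ‖z‖ ^ n ≤ t ^ n := by
        apply pow_le_pow_left₀ (norm_nonneg z)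
        exact le_max_left _ _
      calc ‖z‖ ^ n * ‖M ^ n‖ ≤ t ^ n * (C * b ^ n) :=
            mul_le_mul h1 (hC n) (norm_nonneg _) (by positivity)
        _ = C * (t * b) ^ n := by rw [mul_pow]; ring
    exact (st10_geom (by positivity) htb hbound).1
  have hiden : ∀ z : ℂ, ‖z‖ < 1 + η → z ≠ 1 →
      Ring.inverse (1 - z • A₁) + (z - 1)⁻¹ • Q = Ring.inverse (1 - z • M) * (1 - Q) := by
    intro z hz hz1
    have hu := hinv z hz hz1
    refine hu.mul_left_cancel ?_
    have h1 : (1 - z • A₁) * (Ring.inverse (1 - z • A₁) + (z - 1)⁻¹ • Q) = 1 - Q := by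
      rw [mul_add, Ring.mul_inverse_cancel _ hu, mul_smul_comm]
      have huQ : (1 - z • A₁) * Q = (1 - z) • Q := by
        rw [sub_mul, one_mul, smul_mul_assoc, hAQ, sub_smul, one_smul]
      have hscal : (z - 1)⁻¹ * (1 - z) = -1 := by
        have hz1' : z - 1 ≠ 0 := sub_ne_zero.2 hz1
        rw [show (1:ℂ) - z = -(z - 1) by ring, mul_neg, inv_mul_cancel₀ hz1']
      rw [huQ, smul_smul, hscal, neg_one_smul]
      abel
    have c1 : Commute (z • A₁) (z • M) := (hcommAM.smul_left z).smul_right z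
    have c3 : Commute (1 - z • A₁) (1 - z • M) :=
      (Commute.one_left _).sub_left ((Commute.one_right _).sub_right c1)
    have hcomminv : Commute (1 - z • A₁) (Ring.inverse (1 - z • M)) :=
      st10_commute_inverse (huz z hz) c3
    have h4 : (1 - z • M) * (1 - Q) = (1 - z • A₁) * (1 - Q) := by
      rw [hsplit z, add_mul, mul_assoc, hidem]
      have : Q * (1 - Q) = 0 := by rw [mul_sub, mul_one, hQQ, sub_self]
      rw [this, add_zero]
    have h2 : (1 - z • A₁) * (Ring.inverse (1 - z • M) * (1 - Q)) = 1 - Q := by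
      rw [← mul_assoc, hcomminv.eq, mul_assoc, ← h4, ← mul_assoc,
        Ring.inverse_mul_cancel _ (huz z hz), one_mul]
    rw [h1, h2]
  -- the contour integral: N₋₁ = Q
  have hball : ∀ z ∈ Metric.closedBall (1:ℂ) r, ‖z‖ < 1 + η := by
    intro z hz
    rw [Metric.mem_closedBall, dist_eq_norm] at hz
    calc ‖z‖ = ‖z - 1 + 1‖ := by rw [sub_add_cancel]
      _ ≤ ‖z - 1‖ + ‖(1:ℂ)‖ := norm_add_le _ _
      _ ≤ r + 1 := by rw [norm_one]; linarith
      _ < 1 + η := by linarith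
  have hsphere : ∀ z ∈ Metric.sphere (1:ℂ) r, ‖z‖ < 1 + η ∧ z ≠ 1 := by
    intro z hz
    have hz' := hz
    rw [Metric.mem_sphere, dist_eq_norm] at hz'
    refine ⟨hball z (Metric.sphere_subset_closedBall hz), ?_⟩
    intro h1
    rw [h1, sub_self, norm_zero] at hz'
    linarith
  have hcontinv : ContinuousOn (fun z : ℂ => Ring.inverse (1 - z • M))
      (Metric.closedBall (1:ℂ) r) := by
    intro z hz
    obtain ⟨v, hv⟩ := huz z (hball z hz)
    refine ContinuousAt.continuousWithinAt ?_
    have h1 : ContinuousAt (fun z : ℂ => 1 - z • M) z :=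
      (continuous_const.sub (continuous_id.smul continuous_const)).continuousAt
    have h2 : ContinuousAt Ring.inverse ((1:B →L[ℂ] B) - z • M) := by
      rw [← hv]; exact NormedRing.inverse_continuousAt v
    exact ContinuousAt.comp (x := z) (g := Ring.inverse)
      (f := fun z : ℂ => (1 : B →L[ℂ] B) - z • M) h2 h1
  have hzero : (∮ z in C(1, r), Ring.inverse (1 - z • M) * (1 - Q)) = 0 := by
    refine Complex.circleIntegral_eq_zero_of_differentiable_on_off_countable hr0.le
      Set.countable_empty (hcontinv.mul continuousOn_const) ?_
    intro z hz
    have hzball : z ∈ Metric.closedBall (1:ℂ) r :=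
      Metric.ball_subset_closedBall hz.1
    have h1 : DifferentiableAt ℂ (fun z : ℂ => (1:B →L[ℂ] B) - z • M) z :=
      (differentiableAt_const _).sub (differentiableAt_id.smul_const M)
    exact (h1.inverse (huz z (hball z hzball))).mul_const _
  have hint1 : CircleIntegrable (fun z : ℂ => Ring.inverse (1 - z • M) * (1 - Q)) 1 r :=
    ContinuousOn.circleIntegrable hr0.le
      ((hcontinv.mono Metric.sphere_subset_closedBall).mul continuousOn_const)
  have hint2 : CircleIntegrable (fun z : ℂ => (z - 1)⁻¹ • Q) 1 r := by
    refine ContinuousOn.circleIntegrable hr0.le ?_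
    refine ContinuousOn.smul (f := fun z : ℂ => (z - 1)⁻¹) (g := fun _ : ℂ => Q) ?_ continuousOn_const
    exact ((continuousOn_id.sub continuousOn_const).inv₀
      fun z hz => sub_ne_zero.2 (hsphere z hz).2)
  have hN1 : laurentN A₁ r (-1) = Q := by
    have heq : Set.EqOn (fun z : ℂ => Ring.inverse (1 - z • A₁))
        (fun z : ℂ => Ring.inverse (1 - z • M) * (1 - Q) - (z - 1)⁻¹ • Q)
        (Metric.sphere (1:ℂ) r) := by
      intro z hz
      obtain ⟨h1, h2⟩ := hsphere z hz
      exact eq_sub_of_add_eq (hiden z h1 h2)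
    have hIturn : (∮ z in C(1, r), Ring.inverse (1 - z • A₁))
        = -(2 * (Real.pi : ℂ) * Complex.I) • Q := by
      rw [st10_circleIntegral_congr hr0.le heq, circleIntegral.integral_sub hint1 hint2,
        hzero, circleIntegral.integral_smul_const, zero_sub,
        circleIntegral.integral_sub_inv_of_mem_ball (Metric.mem_ball_self hr0), neg_smul]
    rw [laurentN]
    have hfun : (fun z : ℂ => (z - 1) ^ (-(-1 : ℤ) - 1) • Ring.inverse (1 - z • A₁))
        = fun z : ℂ => Ring.inverse (1 - z • A₁) := by
      funext z
      have he0 : (-(-1 : ℤ) - 1) = 0 := by norm_num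
      rw [he0, zpow_zero, one_smul]
    rw [hfun, hIturn, smul_smul, neg_mul_neg,
      inv_mul_cancel₀ Complex.two_pi_I_ne_zero, one_smul]
  have hPQ : P = Q := by rw [hP, hN1, hQA]
  constructor
  · set a : ℝ := ((1 + η)⁻¹ + 1) / 2 with ha
    have hainv : (1 + η)⁻¹ < 1 := by
      rw [inv_lt_one_iff₀]; right; linarith
    have hinvpos : (0:ℝ) < (1 + η)⁻¹ := by positivity
    have ha1 : (1 + η)⁻¹ < a := by rw [ha]; linarith
    obtain ⟨C, hC1, hC⟩ := hgeomM a ha1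
    refine ⟨C * ‖(1 : B →L[ℂ] B) - Q‖, by positivity, a,
      ⟨by rw [ha]; linarith, by rw [ha]; linarith⟩, ?_⟩
    intro j
    rw [hPQ, ← hpow j]
    calc ‖M ^ j * (1 - Q)‖ ≤ ‖M ^ j‖ * ‖(1 : B →L[ℂ] B) - Q‖ := norm_mul_le _ _
      _ ≤ C * a ^ j * ‖(1 : B →L[ℂ] B) - Q‖ :=
          mul_le_mul_of_nonneg_right (hC j) (norm_nonneg _)
      _ = C * ‖(1 : B →L[ℂ] B) - Q‖ * a ^ j := by ring
  · intro z hz hz1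
    have h2 := (hgeo2 z hz).mul_right (1 - Q)
    have hterm : ∀ j : ℕ, (z • M) ^ j * (1 - Q) = z ^ j • (A₁ ^ j * (1 - Q)) := by
      intro j
      rw [smul_pow, smul_mul_assoc, hpow j]
    simp_rw [hterm] at h2
    rwa [hPQ, hiden z hz hz1]
end

section
/- Assume B^p = ran(I_p − 𝒜₁) ⊕ ker(I_p − 𝒜₁) as an internal direct sum of closed subspaces, and let 𝒫 be the bounded projection onto ker(I_p − 𝒜₁) along ran(I_p − 𝒜₁). Let (x_t)_{t ≥ −p+1} and (e_t)_{t ≥ 1} be sequences in B satisfying the AR(p) law of motion x_t = A₁x_{t−1} + ⋯ + A_p x_{t−p} + e_t for all t ≥ 1, and set x̃_t := (x_t, x_{t−1}, …, x_{t−p+1}) ∈ B^p and ẽ_t := ι(e_t) = (e_t, 0, …, 0). Then for every t ≥ 0: x̃_t = 𝒫x̃₀ + ∑_{s=1}^t 𝒫ẽ_s + 𝒜₁^t(I_p − 𝒫)x̃₀ + ∑_{j=0}^{t−1} 𝒜₁^j(I_p − 𝒫)ẽ_{t−j}. In particular, x_t = π(𝒫x̃₀) + ∑_{s=1}^t (π∘𝒫∘ι)(e_s)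 + π(𝒜₁^t(I_p − 𝒫)x̃₀) + ∑_{j=0}^{t−1} (π∘𝒜₁^j(I_p − 𝒫)∘ι)(e_{t−j}). -/
/-- The companion operator `𝒜₁(x₁, …, x_p) = (A₁x₁ + ⋯ + A_p x_p, x₁, …, x_{p−1})`
on the product space `B^p` (here `p = p' + 1 ≥ 1`, indexed by `Fin (p' + 1)`). -/
noncomputable def companion {B : Type*} [NormedAddCommGroup B] [NormedSpace ℂ B]
    {p : ℕ} (A : Fin (p + 1) → (B →L[ℂ] B)) :
    (Fin (p + 1) → B) →L[ℂ] (Fin (p + 1) → B) :=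
  ContinuousLinearMap.pi fun i =>
    Fin.cases (motive := fun _ => (Fin (p + 1) → B) →L[ℂ] B)
      (∑ j, (A j).comp (ContinuousLinearMap.proj j))
      (fun k => ContinuousLinearMap.proj (Fin.castSucc k)) i

/-- The embedding `ι : B → B^p`, `ι(x) = (x, 0, …, 0)`. -/
noncomputable def iotaMap {B : Type*} [NormedAddCommGroup B] [NormedSpace ℂ B]
    {p : ℕ} : B →L[ℂ] (Fin (p + 1) → B) :=
  ContinuousLinearMap.pi fun i => if i = 0 then ContinuousLinearMap.id ℂ B else 0

/-- if `B^p = ran(I_p − 𝒜₁) ⊕ ker(I_p − 𝒜₁)` (internal direct sum of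
closed subspaces) and `Pc` is the bounded projection onto `ker(I_p − 𝒜₁)` along
`ran(I_p − 𝒜₁)`, then any solution of the AR(p) law of motion
`x_t = A₁x_{t−1} + ⋯ + A_p x_{t−p} + e_t` (`t ≥ 1`) satisfies, with
`x̃_t = (x_t, …, x_{t−p+1})` and `ẽ_t = ι(e_t)`, for every `t ≥ 0`:
`x̃_t = Pcx̃₀ + ∑_{s=1}^t Pcẽ_s + 𝒜₁^t(I_p − Pc)x̃₀ + ∑_{j=0}^{t−1} 𝒜₁^j(I_p − Pc)ẽ_{t−j}`,
and in particular the corresponding identity for `x_t` after applying `π`. -/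
theorem statement11
    {B : Type*} [NormedAddCommGroup B] [NormedSpace ℂ B] [CompleteSpace B]
    {p : ℕ} (A : Fin (p + 1) → (B →L[ℂ] B))
    (hcompl : IsCompl (LinearMap.range ((1 - companion A : (Fin (p + 1) → B) →L[ℂ] (Fin (p + 1) → B)) : (Fin (p + 1) → B) →ₗ[ℂ] (Fin (p + 1) → B)))
      (LinearMap.ker ((1 - companion A : (Fin (p + 1) → B) →L[ℂ] (Fin (p + 1) → B)) : (Fin (p + 1) → B) →ₗ[ℂ] (Fin (p + 1) → B))))
    (hclosed : IsClosed
      ((LinearMap.range ((1 - companion A : (Fin (p + 1) → B) →L[ℂ] (Fin (p + 1) → B)) : (Fin (p + 1) → B) →ₗ[ℂ] (Fin (p + 1) → B)) : Submodule ℂ (Fin (p + 1) → B)) :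
        Set (Fin (p + 1) → B)))
    (Pc : (Fin (p + 1) → B) →L[ℂ] (Fin (p + 1) → B))
    (hPcidem : Pc * Pc = Pc)
    (hPcrange : LinearMap.range (Pc : (Fin (p + 1) → B) →ₗ[ℂ] (Fin (p + 1) → B)) = LinearMap.ker ((1 - companion A : (Fin (p + 1) → B) →L[ℂ] (Fin (p + 1) → B)) : (Fin (p + 1) → B) →ₗ[ℂ] (Fin (p + 1) → B)))
    (hPcker : LinearMap.ker (Pc : (Fin (p + 1) → B) →ₗ[ℂ] (Fin (p + 1) → B)) = LinearMap.range ((1 - companion A : (Fin (p + 1) → B) →L[ℂ] (Fin (p + 1) → B)) : (Fin (p + 1) → B) →ₗ[ℂ] (Fin (p + 1) → B)))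
    (x e : ℤ → B)
    (hlaw : ∀ t : ℤ, 1 ≤ t →
      x t = (∑ j : Fin (p + 1), A j (x (t - ((j : ℕ) + 1 : ℤ)))) + e t)
    (xt et : ℤ → (Fin (p + 1) → B))
    (hxt : ∀ t : ℤ, xt t = fun i : Fin (p + 1) => x (t - (i : ℕ)))
    (het : ∀ t : ℤ, et t = iotaMap (e t)) :
    ∀ t : ℕ,
      (xt t = Pc (xt 0) + (∑ s ∈ Finset.Icc 1 t, Pc (et s))
        + ((companion A) ^ t * (1 - Pc)) (xt 0)
        + ∑ j ∈ Finset.range t, ((companion A) ^ j * (1 - Pc)) (et ((t : ℤ) - j))) ∧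
      (x t = Pc (xt 0) 0 + (∑ s ∈ Finset.Icc 1 t, Pc (et s) 0)
        + ((companion A) ^ t * (1 - Pc)) (xt 0) 0
        + ∑ j ∈ Finset.range t, ((companion A) ^ j * (1 - Pc)) (et ((t : ℤ) - j)) 0) := by
  -- 𝒜₁ ∘ Pc = Pc since range Pc = ker (1 - 𝒜₁)
  have hAP : ∀ v, companion A (Pc v) = Pc v := by
    intro v
    have h : Pc v ∈ LinearMap.ker ((1 - companion A : (Fin (p + 1) → B) →L[ℂ] (Fin (p + 1) → B)) : (Fin (p + 1) → B) →ₗ[ℂ] (Fin (p + 1) → B)) := by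
      rw [← hPcrange]; exact ⟨v, rfl⟩
    have h2 : Pc v - companion A (Pc v) = 0 := by
      simpa [ContinuousLinearMap.sub_apply] using h
    exact (sub_eq_zero.mp h2).symm
  -- the companion recursion
  have hrec : ∀ t : ℤ, 1 ≤ t → xt t = companion A (xt (t - 1)) + et t := by
    intro t ht
    funext i
    refine Fin.cases ?_ ?_ i
    · have hl := hlaw t ht
      simp only [hxt, het, companion, iotaMap, Pi.add_apply,
        ContinuousLinearMap.pi_apply, Fin.cases_zero, ContinuousLinearMap.sum_apply,
        ContinuousLinearMap.comp_apply, ContinuousLinearMap.proj_apply,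
        if_pos rfl, ContinuousLinearMap.id_apply]
      simp only [Fin.val_zero, Nat.cast_zero, sub_zero]
      rw [hl]
      congr 1
      refine Finset.sum_congr rfl fun j _ => ?_
      congr 1
      ring
    · intro k
      simp only [hxt, het, companion, iotaMap, Pi.add_apply,
        ContinuousLinearMap.pi_apply, Fin.cases_succ, ContinuousLinearMap.proj_apply,
        if_neg (Fin.succ_ne_zero k), ContinuousLinearMap.zero_apply, add_zero]
      congr 1
      simp only [Fin.val_succ, Fin.coe_castSucc]
      push_cast
      ring
  have main : ∀ t : ℕ,
      xt t = Pc (xt 0) + (∑ s ∈ Finset.Icc 1 t, Pc (et s))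
        + ((companion A) ^ t * (1 - Pc)) (xt 0)
        + ∑ j ∈ Finset.range t, ((companion A) ^ j * (1 - Pc)) (et ((t : ℤ) - j)) := by
    intro t
    induction t with
    | zero =>
      simp [ContinuousLinearMap.sub_apply]
    | succ t ih =>
      have key : xt ((t + 1 : ℕ) : ℤ) = companion A (xt t) + et ((t + 1 : ℕ) : ℤ) := by
        have h := hrec ((t : ℤ) + 1) (by omega)
        push_cast
        simpa using h
      have harg : ∀ j : ℕ, (((t + 1 : ℕ) : ℤ)) - ((j + 1 : ℕ) : ℤ) = (t : ℤ) - j := by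
        intro j; push_cast; ring
      rw [key, ih]
      rw [map_add, map_add, map_add]
      rw [hAP]
      rw [← map_sum, hAP, map_sum]
      have e3 : companion A (((companion A) ^ t * (1 - Pc)) (xt 0))
          = ((companion A) ^ (t + 1) * (1 - Pc)) (xt 0) := by
        simp [pow_succ', ContinuousLinearMap.mul_apply]
      rw [map_sum, e3]
      rw [Finset.sum_Icc_succ_top (by omega : 1 ≤ t + 1)]
      rw [Finset.sum_range_succ']
      simp only [harg]
      have e4 : ∀ j ∈ Finset.range t,
          companion A (((companion A) ^ j * (1 - Pc)) (et ((t : ℤ) - j)))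
          = ((companion A) ^ (j + 1) * (1 - Pc)) (et ((t : ℤ) - j)) := by
        intro j _
        simp [pow_succ', ContinuousLinearMap.mul_apply]
      rw [Finset.sum_congr rfl e4]
      simp only [pow_zero, one_mul, Nat.cast_zero, sub_zero,
        ContinuousLinearMap.sub_apply, ContinuousLinearMap.one_apply]
      push_cast
      abel
  intro t
  refine ⟨main t, ?_⟩
  have h0 : x ((t : ℕ) : ℤ) = xt ((t : ℕ) : ℤ) 0 := by
    rw [hxt]; simp
  have h2 := congrFun (main t) 0
  simp only [Pi.add_apply, Finset.sum_apply] at h2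
  rw [h0]
  exact h2
end

section
/- Assume the covariance operator C_ε is positive definite and A ≠ 0. For every f ∈ B′ the following are equivalent: (i) there exists a B-valued random variable X₀ with E‖X₀‖² < ∞ such that sup_{t ≥ 0} E[(f(X_t))²] < ∞, where X_t := (X₀ − ν₀) + A(∑_{s=1}^t ε_s) + ν_t; (ii) f ∘ A = 0. In particular, for every t ≥ 1 and every f ∈ B′, E[(f(A ∑_{s=1}^t ε_s))²] = t · (f∘A)(C_ε(f∘A)). -/
open MeasureTheory ProbabilityTheory
open scoped ENNReal NNReal

lemma indep_integral_mul_complex {Ω : Type*} [MeasurableSpace Ω] {μ : Measure Ω}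
    [IsProbabilityMeasure μ] {X Y : Ω → ℂ} (h : IndepFun X Y μ)
    (hX : AEMeasurable X μ) (hY : AEMeasurable Y μ) :
    ∫ ω, X ω * Y ω ∂μ = (∫ ω, X ω ∂μ) * ∫ ω, Y ω ∂μ := by
  have hmap := (indepFun_iff_map_prod_eq_prod_map_map hX hY).1 h
  have hpair : AEMeasurable (fun ω => (X ω, Y ω)) μ := hX.prodMk hY
  haveI := Measure.isProbabilityMeasure_map hX
  haveI := Measure.isProbabilityMeasure_map hY
  have h1 : ∫ ω, X ω * Y ω ∂μ
      = ∫ p : ℂ × ℂ, p.1 * p.2 ∂(Measure.map (fun ω => (X ω, Y ω)) μ) :=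
    (integral_map hpair ((continuous_fst.mul continuous_snd).aestronglyMeasurable)).symm
  have h2 := integral_prod_mul (μ := Measure.map X μ) (ν := Measure.map Y μ)
    (fun z : ℂ => z) (fun z : ℂ => z)
  have h3 : ∫ x : ℂ, x ∂(Measure.map X μ) = ∫ ω, X ω ∂μ :=
    integral_map hX continuous_id.aestronglyMeasurable
  have h4 : ∫ x : ℂ, x ∂(Measure.map Y μ) = ∫ ω, Y ω ∂μ :=
    integral_map hY continuous_id.aestronglyMeasurable
  rw [h1, hmap, h2, h3, h4]

lemma integral_complex_ofReal' {α : Type*} [MeasurableSpace α] {μ : Measure α} (f : α → ℝ) :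
    ∫ x, (f x : ℂ) ∂μ = ((∫ x, f x ∂μ : ℝ) : ℂ) :=
  integral_ofReal

set_option maxHeartbeats 2000000 in
/-- let `(ε_t)` be an i.i.d. mean-zero square-integrable sequence in a
separable complex Banach space `B` with positive definite covariance operator `Cep`,
`A ≠ 0` a bounded operator, and `(ν_t)` identically distributed square-integrable.
For `f ∈ B′`, boundedness of the second moments of `f(X_t)` along
`X_t = (X₀ − ν₀) + A ∑_{s=1}^t ε_s + ν_t` (for some square-integrable `X₀`) is
equivalent to `f ∘ A = 0`; in particular
`E[(f(A ∑_{s=1}^t ε_s))²] = t · (f∘A)(Cep(f∘A))` for every `t ≥ 1`. -/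
theorem statement12
    {B : Type*} [NormedAddCommGroup B] [NormedSpace ℂ B] [CompleteSpace B]
    [TopologicalSpace.SeparableSpace B] [MeasurableSpace B] [BorelSpace B]
    {Ω : Type*} [MeasurableSpace Ω] (P : Measure Ω) [IsProbabilityMeasure P]
    (ε : ℤ → Ω → B) (hεmeas : ∀ t, Measurable (ε t))
    (hindep : ProbabilityTheory.iIndepFun ε P)
    (hident : ∀ t, ProbabilityTheory.IdentDistrib (ε t) (ε 0) P P)
    (hL2 : MemLp (ε 0) 2 P)
    (hmean : ∫ ω, ε 0 ω ∂P = 0)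
    (A : B →L[ℂ] B) (hA : A ≠ 0)
    (ν : ℕ → Ω → B) (hνmeas : ∀ t, Measurable (ν t))
    (hνident : ∀ t, ProbabilityTheory.IdentDistrib (ν t) (ν 0) P P)
    (hνL2 : MemLp (ν 0) 2 P)
    (Cep : (B →L[ℂ] ℂ) → B)
    (hCep : ∀ g : B →L[ℂ] ℂ, Cep g = ∫ ω, g (ε 0 ω) • ε 0 ω ∂P)
    (hposdef : ∀ g : B →L[ℂ] ℂ, g (Cep g) = 0 → g = 0)
    (f : B →L[ℂ] ℂ) :
    ((∃ X₀ : Ω → B, MemLp X₀ 2 P ∧ ∃ M : ℝ, ∀ t : ℕ,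
        ∫ ω, ‖f ((X₀ ω - ν 0 ω) + A (∑ s ∈ Finset.Icc 1 t, ε (s : ℤ) ω) + ν t ω)‖ ^ 2 ∂P
          ≤ M) ↔
      f.comp A = 0) ∧
    (∀ t : ℕ, 1 ≤ t →
      ∫ ω, (f (A (∑ s ∈ Finset.Icc 1 t, ε (s : ℤ) ω))) ^ 2 ∂P
        = (t : ℂ) * (f.comp A) (Cep (f.comp A))) := by
  classical
  set g : B →L[ℂ] ℂ := f.comp A with hgdef
  have hgapp : ∀ x : B, f (A x) = g x := fun x => rfl
  have hone : (1 : ℝ≥0∞) / 1 = 1 / 2 + 1 / 2 := by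
    rw [ENNReal.add_halves]; norm_num
  have hεint : Integrable (ε 0) P := hL2.integrable one_le_two
  have hgmeas : Measurable (fun b : B => g b) := g.continuous.measurable
  have hgL2 : MemLp (fun ω => g (ε 0 ω)) 2 P := g.comp_memLp' hL2
  have hgmean : ∫ ω, g (ε 0 ω) ∂P = 0 := by
    rw [ContinuousLinearMap.integral_comp_comm g hεint, hmean, map_zero]
  -- generic second-moment expansion
  have key : ∀ (φ ψ : B → ℂ), Measurable φ → Measurable ψ →
      MemLp (fun ω => φ (ε 0 ω)) 2 P → MemLp (fun ω => ψ (ε 0 ω)) 2 P →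
      (∫ ω, φ (ε 0 ω) ∂P = 0) → (∫ ω, ψ (ε 0 ω) ∂P = 0) →
      ∀ t : ℕ,
        ∫ ω, (∑ s ∈ Finset.Icc 1 t, φ (ε (s : ℤ) ω)) *
              (∑ s ∈ Finset.Icc 1 t, ψ (ε (s : ℤ) ω)) ∂P
          = (t : ℂ) * ∫ ω, φ (ε 0 ω) * ψ (ε 0 ω) ∂P := by
    intro φ ψ hφ hψ hφ2 hψ2 hφ0 hψ0 t
    have hφs : ∀ s : ℤ, MemLp (fun ω => φ (ε s ω)) 2 P := fun s =>
      (((hident s).comp hφ).memLp_iff).mpr hφ2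
    have hψs : ∀ s : ℤ, MemLp (fun ω => ψ (ε s ω)) 2 P := fun s =>
      (((hident s).comp hψ).memLp_iff).mpr hψ2
    have hint : ∀ s r : ℤ, Integrable (fun ω => φ (ε s ω) * ψ (ε r ω)) P := by
      intro s r
      have h := (hψs r).smul (r := 1) (hφs s)
      have h' := memLp_one_iff_integrable.mp h
      exact h'.congr (Filter.Eventually.of_forall fun ω => rfl)
    have step1 : ∫ ω, (∑ s ∈ Finset.Icc 1 t, φ (ε (s : ℤ) ω)) *
          (∑ s ∈ Finset.Icc 1 t, ψ (ε (s : ℤ) ω)) ∂P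
        = ∑ s ∈ Finset.Icc 1 t, ∑ r ∈ Finset.Icc 1 t,
            ∫ ω, φ (ε (s : ℤ) ω) * ψ (ε (r : ℤ) ω) ∂P := by
      simp_rw [Finset.sum_mul_sum]
      rw [integral_finset_sum]
      · exact Finset.sum_congr rfl fun s _ =>
          integral_finset_sum _ (fun r _ => hint (s : ℤ) (r : ℤ))
      · exact fun s _ => integrable_finset_sum _ (fun r _ => hint (s : ℤ) (r : ℤ))
    have hzero : ∀ s r : ℤ, s ≠ r → ∫ ω, φ (ε s ω) * ψ (ε r ω) ∂P = 0 := by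
      intro s r hsr
      have hind : IndepFun (fun ω => φ (ε s ω)) (fun ω => ψ (ε r ω)) P :=
        (hindep.indepFun hsr).comp hφ hψ
      rw [indep_integral_mul_complex hind ((hφ.comp (hεmeas s)).aemeasurable)
        ((hψ.comp (hεmeas r)).aemeasurable)]
      have h1 : ∫ ω, φ (ε s ω) ∂P = ∫ ω, φ (ε 0 ω) ∂P :=
        ((hident s).comp hφ).integral_eq
      rw [h1, hφ0, zero_mul]
    have hdiag : ∀ s : ℤ, ∫ ω, φ (ε s ω) * ψ (ε s ω) ∂P
        = ∫ ω, φ (ε 0 ω) * ψ (ε 0 ω) ∂P :=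
      fun s => ((hident s).comp (hφ.mul hψ)).integral_eq
    rw [step1]
    have step2 : ∀ s ∈ Finset.Icc 1 t,
        ∑ r ∈ Finset.Icc 1 t, ∫ ω, φ (ε (s : ℤ) ω) * ψ (ε (r : ℤ) ω) ∂P
          = ∫ ω, φ (ε 0 ω) * ψ (ε 0 ω) ∂P := by
      intro s hs
      refine (Finset.sum_eq_single_of_mem s hs ?_).trans (hdiag (s : ℤ))
      intro r _ hrs
      apply hzero
      intro hctr
      exact hrs (by exact_mod_cast hctr.symm)
    rw [Finset.sum_congr rfl step2, Finset.sum_const, Nat.card_Icc]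
    simp [nsmul_eq_mul]
  -- the covariance identity
  have hsmul : MemLp (fun ω => g (ε 0 ω) • ε 0 ω) 1 P :=
    MemLp.ae_eq (Filter.Eventually.of_forall fun ω => rfl) (hL2.smul (r := 1) hgL2)
  have hCfact : g (Cep g) = ∫ ω, g (ε 0 ω) * g (ε 0 ω) ∂P := by
    rw [hCep g, ← ContinuousLinearMap.integral_comp_comm g
      (memLp_one_iff_integrable.mp hsmul)]
    simp only [_root_.map_smul, smul_eq_mul]
  -- part 2
  have part2 : ∀ t : ℕ,
      ∫ ω, (f (A (∑ s ∈ Finset.Icc 1 t, ε (s : ℤ) ω))) ^ 2 ∂P = (t : ℂ) * g (Cep g) := by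
    intro t
    have hrw : ∀ ω, (f (A (∑ s ∈ Finset.Icc 1 t, ε (s : ℤ) ω))) ^ 2
        = (∑ s ∈ Finset.Icc 1 t, g (ε (s : ℤ) ω)) *
          (∑ s ∈ Finset.Icc 1 t, g (ε (s : ℤ) ω)) := by
      intro ω
      rw [hgapp, map_sum, sq]
    rw [hCfact, integral_congr_ae (Filter.Eventually.of_forall hrw)]
    exact key (fun b => g b) (fun b => g b) hgmeas hgmeas hgL2 hgL2 hgmean hgmean t
  -- backward direction of part 1
  have backward : g = 0 → (∃ X₀ : Ω → B, MemLp X₀ 2 P ∧ ∃ M : ℝ, ∀ t : ℕ,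
      ∫ ω, ‖f ((X₀ ω - ν 0 ω) + A (∑ s ∈ Finset.Icc 1 t, ε (s : ℤ) ω) + ν t ω)‖ ^ 2 ∂P
        ≤ M) := by
    intro hg0
    refine ⟨ν 0, hνL2, ∫ ω, ‖f (ν 0 ω)‖ ^ 2 ∂P, fun t => ?_⟩
    have heq : ∀ ω, ‖f ((ν 0 ω - ν 0 ω) + A (∑ s ∈ Finset.Icc 1 t, ε (s : ℤ) ω) + ν t ω)‖ ^ 2
        = ‖f (ν t ω)‖ ^ 2 := by
      intro ω
      have hz : f (A (∑ s ∈ Finset.Icc 1 t, ε (s : ℤ) ω)) = 0 := by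
        rw [hgapp, hg0]; rfl
      rw [sub_self, zero_add, map_add, hz, zero_add]
    rw [integral_congr_ae (Filter.Eventually.of_forall heq)]
    have hmeas2 : Measurable fun b : B => ‖f b‖ ^ 2 :=
      ((f.continuous.norm).pow 2).measurable
    have hi : (∫ ω, ‖f (ν t ω)‖ ^ 2 ∂P) = ∫ ω, ‖f (ν 0 ω)‖ ^ 2 ∂P :=
      ((hνident t).comp hmeas2).integral_eq
    exact le_of_eq hi
  -- forward direction of part 1
  have forward : (∃ X₀ : Ω → B, MemLp X₀ 2 P ∧ ∃ M : ℝ, ∀ t : ℕ,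
      ∫ ω, ‖f ((X₀ ω - ν 0 ω) + A (∑ s ∈ Finset.Icc 1 t, ε (s : ℤ) ω) + ν t ω)‖ ^ 2 ∂P
        ≤ M) → g = 0 := by
    rintro ⟨X₀, hX₀, M, hM⟩
    -- conjugate versions
    have hgcmeas : Measurable (fun b : B => (starRingEnd ℂ) (g b)) :=
      Complex.continuous_conj.measurable.comp hgmeas
    have hgcL2 : MemLp (fun ω => (starRingEnd ℂ) (g (ε 0 ω))) 2 P :=
      MemLp.ae_eq (Filter.Eventually.of_forall fun ω => rfl)
        (Complex.conjCLE.toContinuousLinearMap.comp_memLp' hgL2)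
    have hgcmean : ∫ ω, (starRingEnd ℂ) (g (ε 0 ω)) ∂P = 0 := by
      rw [integral_conj, hgmean, map_zero]
    have hcross := key (fun b => g b) (fun b => (starRingEnd ℂ) (g b))
      hgmeas hgcmeas hgL2 hgcL2 hgmean hgcmean
    -- real version of the second moment identity
    have hreal : ∀ t : ℕ, ∫ ω, ‖∑ s ∈ Finset.Icc 1 t, g (ε (s : ℤ) ω)‖ ^ 2 ∂P
        = (t : ℝ) * ∫ ω, ‖g (ε 0 ω)‖ ^ 2 ∂P := by
      intro t
      have h1 := hcross t
      have e1 : ∀ ω, (∑ s ∈ Finset.Icc 1 t, g (ε (s : ℤ) ω)) *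
            (∑ s ∈ Finset.Icc 1 t, (starRingEnd ℂ) (g (ε (s : ℤ) ω)))
          = ((‖∑ s ∈ Finset.Icc 1 t, g (ε (s : ℤ) ω)‖ ^ 2 : ℝ) : ℂ) := by
        intro ω
        rw [← map_sum (starRingEnd ℂ), RCLike.mul_conj]
        norm_cast
      have e2 : ∀ ω, g (ε 0 ω) * (starRingEnd ℂ) (g (ε 0 ω))
          = ((‖g (ε 0 ω)‖ ^ 2 : ℝ) : ℂ) := by
        intro ω
        rw [RCLike.mul_conj]
        norm_cast
      rw [integral_congr_ae (Filter.Eventually.of_forall e1),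
        integral_congr_ae (Filter.Eventually.of_forall e2),
        integral_complex_ofReal', integral_complex_ofReal'] at h1
      exact_mod_cast h1
    -- uniform bound on the second moments of the partial sums
    have hνtL2 : ∀ t : ℕ, MemLp (ν t) 2 P := fun t => ((hνident t).memLp_iff).mpr hνL2
    have hεsL2 : ∀ s : ℤ, MemLp (ε s) 2 P := fun s => ((hident s).memLp_iff).mpr hL2
    have hgsL2 : ∀ s : ℤ, MemLp (fun ω => g (ε s ω)) 2 P := fun s =>
      g.comp_memLp' (hεsL2 s)
    have hSgL2 : ∀ t : ℕ, MemLp (fun ω => ∑ s ∈ Finset.Icc 1 t, g (ε (s : ℤ) ω)) 2 P := by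
      intro t
      exact memLp_finset_sum _ (fun s _ => hgsL2 (s : ℤ))
    have h1L2 : MemLp (fun ω => f (X₀ ω - ν 0 ω)) 2 P := f.comp_memLp' (hX₀.sub hνL2)
    have hfνL2 : ∀ t : ℕ, MemLp (fun ω => f (ν t ω)) 2 P := fun t =>
      f.comp_memLp' (hνtL2 t)
    have hsqInt : ∀ (F : Ω → ℂ), MemLp F 2 P → Integrable (fun ω => ‖F ω‖ ^ 2) P :=
      fun F h => (memLp_two_iff_integrable_sq_norm h.1).mp h
    set C₁ : ℝ := ∫ ω, ‖f (X₀ ω - ν 0 ω)‖ ^ 2 ∂P with hC₁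
    set C₂ : ℝ := ∫ ω, ‖f (ν 0 ω)‖ ^ 2 ∂P with hC₂
    have hfνint : ∀ t : ℕ, ∫ ω, ‖f (ν t ω)‖ ^ 2 ∂P = C₂ := by
      intro t
      have hmeas2 : Measurable fun b : B => ‖f b‖ ^ 2 :=
        ((f.continuous.norm).pow 2).measurable
      exact ((hνident t).comp hmeas2).integral_eq
    have e3 : ∀ (t : ℕ) (ω : Ω),
        f ((X₀ ω - ν 0 ω) + A (∑ s ∈ Finset.Icc 1 t, ε (s : ℤ) ω) + ν t ω)
          = f (X₀ ω - ν 0 ω) + (∑ s ∈ Finset.Icc 1 t, g (ε (s : ℤ) ω)) + f (ν t ω) := by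
      intro t ω
      rw [map_add, map_add, hgapp, map_sum]
    have hXtL2 : ∀ t : ℕ, MemLp (fun ω =>
        f ((X₀ ω - ν 0 ω) + A (∑ s ∈ Finset.Icc 1 t, ε (s : ℤ) ω) + ν t ω)) 2 P := by
      intro t
      refine MemLp.ae_eq (Filter.Eventually.of_forall fun ω => (e3 t ω).symm) ?_
      exact (h1L2.add (hSgL2 t)).add (hfνL2 t)
    have hKbound : ∀ t : ℕ, ∫ ω, ‖∑ s ∈ Finset.Icc 1 t, g (ε (s : ℤ) ω)‖ ^ 2 ∂P
        ≤ 3 * (M + C₁ + C₂) := by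
      intro t
      have hptwise : ∀ ω, ‖∑ s ∈ Finset.Icc 1 t, g (ε (s : ℤ) ω)‖ ^ 2
          ≤ 3 * (‖f ((X₀ ω - ν 0 ω) + A (∑ s ∈ Finset.Icc 1 t, ε (s : ℤ) ω) + ν t ω)‖ ^ 2
              + ‖f (X₀ ω - ν 0 ω)‖ ^ 2 + ‖f (ν t ω)‖ ^ 2) := by
        intro ω
        have h5 : ∑ s ∈ Finset.Icc 1 t, g (ε (s : ℤ) ω)
            = f ((X₀ ω - ν 0 ω) + A (∑ s ∈ Finset.Icc 1 t, ε (s : ℤ) ω) + ν t ω)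
              - f (X₀ ω - ν 0 ω) - f (ν t ω) := by
          rw [e3 t ω]; ring
        have h6 : ‖∑ s ∈ Finset.Icc 1 t, g (ε (s : ℤ) ω)‖
            ≤ ‖f ((X₀ ω - ν 0 ω) + A (∑ s ∈ Finset.Icc 1 t, ε (s : ℤ) ω) + ν t ω)‖
              + ‖f (X₀ ω - ν 0 ω)‖ + ‖f (ν t ω)‖ := by
          rw [h5]
          exact (norm_sub_le _ _).trans (by gcongr; exact norm_sub_le _ _)
        have hnn : (0 : ℝ) ≤ ‖∑ s ∈ Finset.Icc 1 t, g (ε (s : ℤ) ω)‖ := norm_nonneg _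
        nlinarith [norm_nonneg (f ((X₀ ω - ν 0 ω)
            + A (∑ s ∈ Finset.Icc 1 t, ε (s : ℤ) ω) + ν t ω)),
          norm_nonneg (f (X₀ ω - ν 0 ω)), norm_nonneg (f (ν t ω)), sq_nonneg
            (‖f ((X₀ ω - ν 0 ω) + A (∑ s ∈ Finset.Icc 1 t, ε (s : ℤ) ω) + ν t ω)‖
              - ‖f (X₀ ω - ν 0 ω)‖),
          sq_nonneg (‖f ((X₀ ω - ν 0 ω) + A (∑ s ∈ Finset.Icc 1 t, ε (s : ℤ) ω) + ν t ω)‖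
              - ‖f (ν t ω)‖),
          sq_nonneg (‖f (X₀ ω - ν 0 ω)‖ - ‖f (ν t ω)‖)]
      have hintR : Integrable (fun ω =>
          3 * (‖f ((X₀ ω - ν 0 ω) + A (∑ s ∈ Finset.Icc 1 t, ε (s : ℤ) ω) + ν t ω)‖ ^ 2
            + ‖f (X₀ ω - ν 0 ω)‖ ^ 2 + ‖f (ν t ω)‖ ^ 2)) P := by
        exact (((hsqInt _ (hXtL2 t)).add (hsqInt _ h1L2)).add
          (hsqInt _ (hfνL2 t))).const_mul 3
      have hintL : Integrable (fun ω =>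
          ‖∑ s ∈ Finset.Icc 1 t, g (ε (s : ℤ) ω)‖ ^ 2) P := hsqInt _ (hSgL2 t)
      calc ∫ ω, ‖∑ s ∈ Finset.Icc 1 t, g (ε (s : ℤ) ω)‖ ^ 2 ∂P
          ≤ ∫ ω, 3 * (‖f ((X₀ ω - ν 0 ω) + A (∑ s ∈ Finset.Icc 1 t, ε (s : ℤ) ω) + ν t ω)‖ ^ 2
              + ‖f (X₀ ω - ν 0 ω)‖ ^ 2 + ‖f (ν t ω)‖ ^ 2) ∂P :=
            integral_mono hintL hintR hptwise
        _ = 3 * ((∫ ω, ‖f ((X₀ ω - ν 0 ω) + A (∑ s ∈ Finset.Icc 1 t, ε (s : ℤ) ω) + ν t ω)‖ ^ 2 ∂P)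
              + C₁ + ∫ ω, ‖f (ν t ω)‖ ^ 2 ∂P) := by
            have iXt := hsqInt _ (hXtL2 t)
            have i1 := hsqInt _ h1L2
            have iν := hsqInt _ (hfνL2 t)
            have i12 : Integrable (fun ω =>
                ‖f ((X₀ ω - ν 0 ω) + A (∑ s ∈ Finset.Icc 1 t, ε (s : ℤ) ω) + ν t ω)‖ ^ 2
                  + ‖f (X₀ ω - ν 0 ω)‖ ^ 2) P := iXt.add i1
            rw [integral_const_mul, integral_add i12 iν, integral_add iXt i1]
        _ ≤ 3 * (M + C₁ + C₂) := by
            gcongr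
            · exact hM t
            · exact le_of_eq (hfνint t)
    -- conclude the one-step second moment vanishes
    have hc0nonneg : 0 ≤ ∫ ω, ‖g (ε 0 ω)‖ ^ 2 ∂P :=
      integral_nonneg fun ω => sq_nonneg _
    have hc0 : ∫ ω, ‖g (ε 0 ω)‖ ^ 2 ∂P = 0 := by
      by_contra hne
      have hpos : 0 < ∫ ω, ‖g (ε 0 ω)‖ ^ 2 ∂P := lt_of_le_of_ne hc0nonneg (Ne.symm hne)
      obtain ⟨t, ht⟩ := exists_nat_gt ((3 * (M + C₁ + C₂)) / ∫ ω, ‖g (ε 0 ω)‖ ^ 2 ∂P)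
      have h7 : 3 * (M + C₁ + C₂) < (t : ℝ) * ∫ ω, ‖g (ε 0 ω)‖ ^ 2 ∂P :=
        (div_lt_iff₀ hpos).mp ht
      have h8 := hKbound t
      rw [hreal t] at h8
      linarith
    -- hence g (ε 0) = 0 a.e.
    have hae : ∀ᵐ ω ∂P, g (ε 0 ω) = 0 := by
      have h9 := (integral_eq_zero_iff_of_nonneg (fun ω => sq_nonneg _)
        (hsqInt _ hgL2)).mp hc0
      filter_upwards [h9] with ω hω
      have : ‖g (ε 0 ω)‖ ^ 2 = 0 := hω
      have h10 : ‖g (ε 0 ω)‖ = 0 := by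
        nlinarith [norm_nonneg (g (ε 0 ω))]
      exact norm_eq_zero.mp h10
    apply hposdef
    rw [hCfact]
    have h11 : (fun ω => g (ε 0 ω) * g (ε 0 ω)) =ᵐ[P] 0 := by
      filter_upwards [hae] with ω hω
      simp [hω]
    rw [integral_congr_ae h11]
    simp
  exact ⟨⟨forward, backward⟩, fun t _ => part2 t⟩
end

section
/- Under the unit-root assumption, if N_{−2} ≠ 0 and N_{−m} = 0 for every m ≥ 3 (i.e. (I − zA₁)^{−1} has a pole of order 2 at z = 1), then ran(I − A₁) ∩ ker(I − A₁) ≠ {0}. -/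
namespace Statement13Aux

open Complex Metric Set

set_option linter.unusedSectionVars false
set_option maxHeartbeats 1000000

variable {B : Type*} [NormedAddCommGroup B] [NormedSpace ℂ B] [CompleteSpace B]

lemma clm_circleIntegral {E F : Type*} [NormedAddCommGroup E] [NormedSpace ℂ E]
    [CompleteSpace E] [NormedAddCommGroup F] [NormedSpace ℂ F] [CompleteSpace F]
    (L : E →L[ℂ] F) {f : ℂ → E} {c : ℂ} {R : ℝ}
    (hf : CircleIntegrable f c R) :
    L (∮ z in C(c, R), f z) = ∮ z in C(c, R), L (f z) := by
  rw [circleIntegral, circleIntegral, ← L.intervalIntegral_comp_comm hf.out]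
  simp

lemma circleIntegral_add {E : Type*} [NormedAddCommGroup E] [NormedSpace ℂ E]
    {f g : ℂ → E} {c : ℂ} {R : ℝ}
    (hf : CircleIntegrable f c R) (hg : CircleIntegrable g c R) :
    (∮ z in C(c, R), (f z + g z)) = (∮ z in C(c, R), f z) + ∮ z in C(c, R), g z := by
  simp only [circleIntegral, smul_add]
  exact intervalIntegral.integral_add hf.out hg.out

lemma unit_on_sphere (A₁ : B →L[ℂ] B) {η r : ℝ} (hη : 0 < η)
    (hinv : ∀ z : ℂ, ‖z‖ < 1 + η → z ≠ 1 → IsUnit (1 - z • A₁))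
    (hr0 : 0 < r) (hrη : r < η) {z : ℂ} (hz : z ∈ sphere (1 : ℂ) r) :
    IsUnit (1 - z • A₁) := by
  have h1 : ‖z - 1‖ = r := by
    simpa [Complex.dist_eq] using hz
  apply hinv
  · calc ‖z‖ = ‖(z - 1) + 1‖ := by ring_nf
      _ ≤ ‖z - 1‖ + ‖(1 : ℂ)‖ := norm_add_le _ _
      _ = r + 1 := by rw [h1]; simp
      _ < 1 + η := by linarith
  · intro h
    rw [h] at h1
    simp at h1
    linarith

lemma zsub_ne {r : ℝ} (hr0 : 0 < r) {z : ℂ} (hz : z ∈ sphere (1 : ℂ) r) : z - 1 ≠ 0 := by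
  have h1 : ‖z - 1‖ = r := by simpa [Complex.dist_eq] using hz
  intro h
  rw [h] at h1; simp at h1; linarith

lemma contR (A₁ : B →L[ℂ] B) {η r : ℝ} (hη : 0 < η)
    (hinv : ∀ z : ℂ, ‖z‖ < 1 + η → z ≠ 1 → IsUnit (1 - z • A₁))
    (hr0 : 0 < r) (hrη : r < η) :
    ContinuousOn (fun z : ℂ => Ring.inverse (1 - z • A₁)) (sphere (1 : ℂ) r) := by
  intro z hz
  have hu := unit_on_sphere A₁ hη hinv hr0 hrη hz
  have h1 : ContinuousAt (fun z : ℂ => 1 - z • A₁) z := by fun_prop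
  have h2 : ContinuousAt (Ring.inverse : (B →L[ℂ] B) → _) (1 - z • A₁) := by
    have := NormedRing.inverse_continuousAt hu.unit
    rwa [hu.unit_spec] at this
  have h3 : ContinuousAt ((Ring.inverse : (B →L[ℂ] B) → _) ∘ fun z : ℂ => 1 - z • A₁) z :=
    ContinuousAt.comp (x := z) h2 h1
  exact h3.continuousWithinAt

lemma contF (A₁ : B →L[ℂ] B) {η r : ℝ} (hη : 0 < η)
    (hinv : ∀ z : ℂ, ‖z‖ < 1 + η → z ≠ 1 → IsUnit (1 - z • A₁))
    (hr0 : 0 < r) (hrη : r < η) (k : ℤ) :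
    ContinuousOn (fun z : ℂ => (z - 1) ^ (-k - 1) • Ring.inverse (1 - z • A₁))
      (sphere (1 : ℂ) r) := by
  refine ContinuousOn.smul (f := fun z : ℂ => (z - 1) ^ (-k - 1))
    (g := fun z : ℂ => Ring.inverse (1 - z • A₁)) ?_ ?_
  · exact ContinuousOn.zpow₀ (by fun_prop) _ (fun z hz => Or.inl (zsub_ne hr0 hz))
  · exact contR A₁ hη hinv hr0 hrη

lemma key (A₁ : B →L[ℂ] B) {η r : ℝ} (hη : 0 < η)
    (hinv : ∀ z : ℂ, ‖z‖ < 1 + η → z ≠ 1 → IsUnit (1 - z • A₁))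
    (hr0 : 0 < r) (hrη : r < η) {j : ℤ} (hj : j ≠ 0) :
    (1 - A₁) * laurentN A₁ r j = A₁ * laurentN A₁ r (j - 1) := by
  set R : ℂ → (B →L[ℂ] B) := fun z => Ring.inverse (1 - z • A₁) with hRdef
  have hintF : ∀ k : ℤ, CircleIntegrable (fun z => (z - 1) ^ (-k - 1) • R z) 1 r :=
    fun k => (contF A₁ hη hinv hr0 hrη k).circleIntegrable hr0.le
  have hL : ∀ (T : B →L[ℂ] B) (k : ℤ),
      T * (∮ z in C(1, r), (z - 1) ^ (-k - 1) • R z)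
        = ∮ z in C(1, r), T * ((z - 1) ^ (-k - 1) • R z) := by
    intro T k
    exact clm_circleIntegral (ContinuousLinearMap.mul ℂ (B →L[ℂ] B) T) (hintF k)
  -- pointwise identity on the sphere
  have hpt : EqOn (fun z => (1 - A₁) * ((z - 1) ^ (-j - 1) • R z))
      (fun z => (z - 1) ^ (-j - 1) • (1 : B →L[ℂ] B)
        + A₁ * ((z - 1) ^ (-(j - 1) - 1) • R z)) (sphere (1 : ℂ) r) := by
    intro z hz
    have hu := unit_on_sphere A₁ hη hinv hr0 hrη hz
    have hne := zsub_ne hr0 hz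
    have hsplit : (1 - A₁ : B →L[ℂ] B) = (1 - z • A₁) + (z - 1) • A₁ := by
      rw [sub_smul, one_smul]; abel
    have hmul : (1 - A₁) * R z = 1 + (z - 1) • (A₁ * R z) := by
      rw [hsplit, add_mul, smul_mul_assoc, hRdef]
      rw [Ring.mul_inverse_cancel _ hu]
    show (1 - A₁) * ((z - 1) ^ (-j - 1) • R z)
        = (z - 1) ^ (-j - 1) • (1 : B →L[ℂ] B) + A₁ * ((z - 1) ^ (-(j - 1) - 1) • R z)
    rw [mul_smul_comm, hmul, smul_add, smul_smul, mul_smul_comm]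
    congr 2
    rw [show (-(j - 1) - 1 : ℤ) = (-j - 1) + 1 by ring, zpow_add₀ hne, zpow_one]
  calc (1 - A₁) * laurentN A₁ r j
      = (-(2 * (Real.pi : ℂ) * Complex.I)⁻¹) •
        ((1 - A₁) * (∮ z in C(1, r), (z - 1) ^ (-j - 1) • R z)) := by
        rw [laurentN, mul_smul_comm]
    _ = (-(2 * (Real.pi : ℂ) * Complex.I)⁻¹) •
        (∮ z in C(1, r), ((z - 1) ^ (-j - 1) • (1 : B →L[ℂ] B)
          + A₁ * ((z - 1) ^ (-(j - 1) - 1) • R z))) := by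
        rw [hL, circleIntegral.integral_congr hr0.le hpt]
    _ = (-(2 * (Real.pi : ℂ) * Complex.I)⁻¹) •
        ((∮ z in C(1, r), (z - 1) ^ (-j - 1) • (1 : B →L[ℂ] B))
          + ∮ z in C(1, r), A₁ * ((z - 1) ^ (-(j - 1) - 1) • R z)) := by
        rw [circleIntegral_add]
        · exact ((ContinuousOn.zpow₀ (by fun_prop) _
            (fun z hz => Or.inl (zsub_ne hr0 hz))).smul
            continuousOn_const).circleIntegrable hr0.le
        · have : ContinuousOn (fun z : ℂ => A₁ * ((z - 1) ^ (-(j - 1) - 1) • R z))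
              (sphere (1 : ℂ) r) :=
            (continuous_mul_left A₁).comp_continuousOn (contF A₁ hη hinv hr0 hrη (j - 1))
          exact this.circleIntegrable hr0.le
    _ = A₁ * laurentN A₁ r (j - 1) := by
        have h0 : (∮ z in C(1, r), (z - 1) ^ (-j - 1) • (1 : B →L[ℂ] B)) = 0 := by
          rw [circleIntegral.integral_smul_const,
            circleIntegral.integral_sub_zpow_of_ne (by omega) 1 1 r, zero_smul]
        rw [h0, zero_add, ← hL, laurentN, mul_smul_comm]

end Statement13Aux

/-- under the unit-root assumption, if `(I - zA₁)⁻¹` has a pole of order 2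
at `z = 1` (`N_{-2} ≠ 0` and `N_{-m} = 0` for all `m ≥ 3`), then
`ran (I - A₁) ∩ ker (I - A₁) ≠ {0}`. -/
theorem statement13
    {B : Type*} [NormedAddCommGroup B] [NormedSpace ℂ B] [CompleteSpace B]
    (A₁ : B →L[ℂ] B) (η : ℝ) (hη : 0 < η)
    (hinv : ∀ z : ℂ, ‖z‖ < 1 + η → z ≠ 1 → IsUnit (1 - z • A₁))
    (hnot : ¬ IsUnit (1 - A₁))
    (r : ℝ) (hr0 : 0 < r) (hrη : r < η)
    (hN2 : laurentN A₁ r (-2) ≠ 0)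
    (hNm : ∀ m : ℤ, 3 ≤ m → laurentN A₁ r (-m) = 0) :
    LinearMap.range ((1 - A₁ : B →L[ℂ] B) : B →ₗ[ℂ] B) ⊓ LinearMap.ker ((1 - A₁ : B →L[ℂ] B) : B →ₗ[ℂ] B) ≠ (⊥ : Submodule ℂ B) := by
  have h3 : laurentN A₁ r (-3) = 0 := hNm 3 le_rfl
  have h2 : (1 - A₁) * laurentN A₁ r (-2) = 0 := by
    have hk := Statement13Aux.key A₁ hη hinv hr0 hrη (j := -2) (by norm_num)
    rw [hk, show (-2 : ℤ) - 1 = -3 by norm_num, h3, mul_zero]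
  have hfix : A₁ * laurentN A₁ r (-2) = laurentN A₁ r (-2) := by
    have h2' : laurentN A₁ r (-2) - A₁ * laurentN A₁ r (-2) = 0 := by
      rw [← one_mul (laurentN A₁ r (-2)), ← mul_assoc]
      simpa [sub_mul] using h2
    exact (sub_eq_zero.mp h2').symm
  have h1 : (1 - A₁) * laurentN A₁ r (-1) = laurentN A₁ r (-2) := by
    have hk := Statement13Aux.key A₁ hη hinv hr0 hrη (j := -1) (by norm_num)
    rw [hk, show (-1 : ℤ) - 1 = -2 by norm_num, hfix]
  obtain ⟨x, hx⟩ : ∃ x, laurentN A₁ r (-2) x ≠ 0 := by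
    by_contra h
    push_neg at h
    exact hN2 (ContinuousLinearMap.ext fun x => h x)
  intro hbot
  have hmem : laurentN A₁ r (-2) x ∈
      LinearMap.range ((1 - A₁ : B →L[ℂ] B) : B →ₗ[ℂ] B) ⊓ LinearMap.ker ((1 - A₁ : B →L[ℂ] B) : B →ₗ[ℂ] B) := by
    refine Submodule.mem_inf.mpr ⟨⟨laurentN A₁ r (-1) x, ?_⟩, ?_⟩
    · rw [← h1]; rfl
    · show (1 - A₁) (laurentN A₁ r (-2) x) = 0
      rw [← ContinuousLinearMap.mul_apply, h2]
      rfl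
  rw [hbot] at hmem
  exact hx ((Submodule.mem_bot ℂ).mp hmem)
end
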